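/- arXiv:1607.06962 — 9 statements merged into one kernel-verified Lean document; each statement's English description precedes it below -/
import Mathlib

section
/- Let f and g be q-polynomials over F_{q^n} (which are exactly the F_q-linear maps of F_{q^n}). If D_f = D_g (equivalently, the linear sets L_f and L_g of PG(1,q^n) coincide), then for every positive integer d, the sum over all nonzero x in F_{q^n} of (f(x)/x)^d equals the sum over all nonzero x in F_{q^n} of (g(x)/x)^d. -/
lemma fiber_card_aux {F : Type} [Field F] [Fintype F] [DecidableEq F] {p : ℕ}
    (hp : p.Prime) (hcard : ∃ m : ℕ, Fintype.card F = p ^ m) (hpF : (p : F) = 0)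
    {f : F → F} (hadd : ∀ x z : F, f (x + z) = f x + f z)
    {y : F} (hy : ∃ x : F, x ≠ 0 ∧ f x / x = y) :
    ((Finset.univ.filter (fun x : F => x ≠ 0 ∧ f x / x = y)).card : F) = -1 := by
  have hf0 : f 0 = 0 := by
    have h := hadd 0 0
    rw [add_zero] at h
    exact (left_eq_add.mp h)
  have hneg : ∀ x : F, f (-x) = -f x := by
    intro x
    have h := hadd x (-x)
    rw [add_neg_cancel, hf0] at h
    exact eq_neg_of_add_eq_zero_right h.symm
  set S : AddSubgroup F :=
    { carrier := {x : F | f x = y * x}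
      zero_mem' := by simp [hf0]
      add_mem' := by
        intro u v hu hv
        simp only [Set.mem_setOf_eq] at *
        rw [hadd, hu, hv]; ring
      neg_mem' := by
        intro u hu
        simp only [Set.mem_setOf_eq] at *
        rw [hneg, hu]; ring } with hS
  set T : Finset F := Finset.univ.filter (fun x : F => f x = y * x) with hT
  have hmemS : ∀ x : F, x ∈ S ↔ f x = y * x := fun x => Iff.rfl
  have hTcard : Nat.card S = T.card := by
    rw [Nat.card_congr (Equiv.subtypeEquivRight hmemS), Nat.card_eq_fintype_card,
      Fintype.card_subtype]
  obtain ⟨x₀, hx₀, hfx₀⟩ := hy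
  have hx₀T : x₀ ∈ T := by
    simp only [hT, Finset.mem_filter, Finset.mem_univ, true_and]
    field_simp at hfx₀
    linear_combination hfx₀
  have h0T : (0 : F) ∈ T := by
    simp [hT, hf0]
  -- the filter set equals T.erase 0
  have hfil : Finset.univ.filter (fun x : F => x ≠ 0 ∧ f x / x = y) = T.erase 0 := by
    ext x
    simp only [Finset.mem_filter, Finset.mem_univ, true_and, Finset.mem_erase, hT]
    constructor
    · rintro ⟨hx, hxy⟩
      refine ⟨hx, ?_⟩
      field_simp at hxy
      linear_combination hxy
    · rintro ⟨hx, hxy⟩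
      refine ⟨hx, ?_⟩
      rw [hxy]
      field_simp
  -- card T = p ^ k with k ≥ 1
  obtain ⟨m, hm⟩ := hcard
  have hdvd : Nat.card S ∣ p ^ m := by
    have := AddSubgroup.card_addSubgroup_dvd_card S
    rwa [Nat.card_eq_fintype_card (α := F), hm] at this
  obtain ⟨k, hk, hpk⟩ := (Nat.dvd_prime_pow hp).mp hdvd
  have h2 : 1 < T.card :=
    Finset.one_lt_card.mpr ⟨x₀, hx₀T, 0, h0T, hx₀⟩
  have hk1 : k ≠ 0 := by
    intro h
    rw [h, pow_zero] at hpk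
    rw [hTcard] at hpk
    omega
  have hcast : (T.card : F) = 0 := by
    rw [← hTcard, hpk]
    push_cast
    rw [hpF, zero_pow hk1]
  rw [hfil, Finset.card_erase_of_mem h0T]
  have h1 : 1 ≤ T.card := le_of_lt h2
  push_cast [Nat.cast_sub h1]
  rw [hcast]
  ring

/-- If the linear sets `L_f` and `L_g` (equivalently, the sets `D_f = D_g`
of quotients `f(x)/x`) coincide, then for every positive integer `d` the power sums of
`f(x)/x` and `g(x)/x` over the nonzero elements agree. -/
theorem stmt_0 (p e n q : ℕ) (hp : p.Prime) (he : 0 < e) (hn : 0 < n) (hq : q = p ^ e)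
    (F : Type) [Field F] [Fintype F] [DecidableEq F] (hF : Fintype.card F = q ^ n)
    (a b : ℕ → F) (f g : F → F)
    (hf : ∀ x : F, f x = ∑ i ∈ Finset.range n, a i * x ^ q ^ i)
    (hg : ∀ x : F, g x = ∑ i ∈ Finset.range n, b i * x ^ q ^ i)
    (hD : {y : F | ∃ x : F, x ≠ 0 ∧ f x / x = y} = {y : F | ∃ x : F, x ≠ 0 ∧ g x / x = y})
    (d : ℕ) (hd : 0 < d) :
    ∑ x ∈ Finset.univ.filter (fun x : F => x ≠ 0), (f x / x) ^ d
      = ∑ x ∈ Finset.univ.filter (fun x : F => x ≠ 0), (g x / x) ^ d := by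
  have hcard : ∃ m : ℕ, Fintype.card F = p ^ m := ⟨e * n, by rw [hF, hq, ← pow_mul]⟩
  -- characteristic
  have hpF : (p : F) = 0 := by
    have h0 : ((Fintype.card F : ℕ) : F) = 0 := Nat.cast_card_eq_zero F
    obtain ⟨m, hm⟩ := hcard
    rw [hm] at h0
    push_cast at h0
    have hm0 : m ≠ 0 := by
      rintro rfl
      rw [pow_zero] at hm
      have := Fintype.one_lt_card_iff_nontrivial (α := F) |>.mpr inferInstance
      omega
    exact pow_eq_zero_iff hm0 |>.mp h0
  haveI : Fact p.Prime := ⟨hp⟩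
  haveI hC : CharP F p := by
    have hd' := ringChar.dvd hpF
    rcases (Nat.Prime.eq_one_or_self_of_dvd hp _ hd') with h1 | h1
    · exact absurd h1 (CharP.ringChar_ne_one)
    · rw [← h1]; exact ringChar.charP F
  -- additivity
  have haddf : ∀ (c : ℕ → F) (h : F → F)
      (hh : ∀ x : F, h x = ∑ i ∈ Finset.range n, c i * x ^ q ^ i),
      ∀ x z : F, h (x + z) = h x + h z := by
    intro c h hh x z
    rw [hh, hh, hh, ← Finset.sum_add_distrib]
    apply Finset.sum_congr rfl
    intro i _
    have : (x + z) ^ q ^ i = x ^ q ^ i + z ^ q ^ i := by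
      rw [hq, ← pow_mul]
      exact add_pow_char_pow x z p (e * i)
    rw [this]; ring
  have hfa := haddf a f hf
  have hga := haddf b g hg
  -- rewrite sums fiberwise
  rw [Finset.sum_comp (fun y : F => y ^ d) (fun x : F => f x / x),
      Finset.sum_comp (fun y : F => y ^ d) (fun x : F => g x / x)]
  have himg : Finset.image (fun x : F => f x / x) (Finset.univ.filter (fun x : F => x ≠ 0))
      = Finset.image (fun x : F => g x / x) (Finset.univ.filter (fun x : F => x ≠ 0)) := by
    ext y
    have := Set.ext_iff.mp hD y
    simp only [Set.mem_setOf_eq] at this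
    simp only [Finset.mem_image, Finset.mem_filter, Finset.mem_univ, true_and]
    constructor
    · rintro ⟨x, hx, hxy⟩
      obtain ⟨z, hz, hzy⟩ := this.mp ⟨x, hx, hxy⟩
      exact ⟨z, hz, hzy⟩
    · rintro ⟨x, hx, hxy⟩
      obtain ⟨z, hz, hzy⟩ := this.mpr ⟨x, hx, hxy⟩
      exact ⟨z, hz, hzy⟩
  rw [himg]
  apply Finset.sum_congr rfl
  intro y hy
  rw [Finset.filter_filter, Finset.filter_filter]
  have hyg : ∃ x : F, x ≠ 0 ∧ g x / x = y := by
    simpa using hy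
  have hyf : ∃ x : F, x ≠ 0 ∧ f x / x = y := (Set.ext_iff.mp hD y).mpr hyg
  have c1 := fiber_card_aux hp hcard hpF hfa hyf
  have c2 := fiber_card_aux hp hcard hpF hga hyg
  rw [nsmul_eq_mul, nsmul_eq_mul, c1, c2]
end

section
/- Let f(x) = Σ_{i=0}^{n-1} a_i x^{q^i} and g(x) = Σ_{i=0}^{n-1} b_i x^{q^i} be q-polynomials over F_{q^n} with D_f = D_g. Then: (1) a_0 = b_0; (2) for every k with 1 ≤ k ≤ n-1, a_k · a_{n-k}^{q^k} = b_k · b_{n-k}^{q^k}; and (3) for every k with 2 ≤ k ≤ n-1, a_1 · a_{k-1}^{q} · a_{n-k}^{q^k} + a_k · a_{n-1}^{q} · a_{n-k+1}^{q^k} = b_1 · b_{k-1}^{q} · b_{n-k}^{q^k} + b_k · b_{n-1}^{q} · b_{n-k+1}^{q^k}. -/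
lemma aux_dvd_one {q x y : ℕ} (hq : 2 ≤ q) (hx : q ∣ x) (hxy : q ∣ y) (h : x = 1 + y) : False := by
  have h1 : q ∣ 1 := by
    have := Nat.dvd_sub hx hxy
    rw [h] at this
    simpa using this
  have := Nat.le_of_dvd one_pos h1
  omega

lemma aux_two_pow {q A B k : ℕ} (hq : 2 ≤ q) (hk : 1 ≤ k)
    (h : q ^ A + q ^ B = 1 + q ^ k) : (A = 0 ∧ B = k) ∨ (A = k ∧ B = 0) := by
  rcases Nat.eq_zero_or_pos A with hA | hA
  · subst hA
    simp only [pow_zero] at h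
    exact Or.inl ⟨rfl, Nat.pow_right_injective hq (show q ^ B = q ^ k by omega)⟩
  rcases Nat.eq_zero_or_pos B with hB | hB
  · subst hB
    simp only [pow_zero] at h
    exact Or.inr ⟨Nat.pow_right_injective hq (show q ^ A = q ^ k by omega), rfl⟩
  exact absurd h (fun h => aux_dvd_one hq
    (dvd_add (dvd_pow_self q (by omega : A ≠ 0)) (dvd_pow_self q (by omega : B ≠ 0)))
    (dvd_pow_self q (by omega : k ≠ 0)) h)

lemma aux_two_pow' {q A B k : ℕ} (hq : 2 ≤ q) (hk : 2 ≤ k)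
    (h : q ^ A + q ^ B = q + q ^ k) : (A = 1 ∧ B = k) ∨ (A = k ∧ B = 1) := by
  have hq4 : 4 ≤ q ^ k := by
    calc (4:ℕ) = 2^2 := rfl
    _ ≤ q ^ 2 := Nat.pow_le_pow_left hq 2
    _ ≤ q ^ k := Nat.pow_le_pow_right (by omega) hk
  have hA : 1 ≤ A := by
    by_contra hA'
    have hA0 : A = 0 := by omega
    subst hA0
    simp only [pow_zero] at h
    have hB : B ≠ 0 := by
      rintro rfl; simp only [pow_zero] at h; omega
    exact aux_dvd_one hq (dvd_add (dvd_refl q) (dvd_pow_self q (by omega : k ≠ 0)))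
      (dvd_pow_self q hB) (by omega)
  have hB : 1 ≤ B := by
    by_contra hB'
    have hB0 : B = 0 := by omega
    subst hB0
    simp only [pow_zero] at h
    exact aux_dvd_one hq (dvd_add (dvd_refl q) (dvd_pow_self q (by omega : k ≠ 0)))
      (dvd_pow_self q (by omega : A ≠ 0)) (by omega)
  have e1 : q ^ A = q * q ^ (A - 1) := by
    conv_lhs => rw [show A = 1 + (A-1) by omega, pow_add, pow_one]
  have e2 : q ^ B = q * q ^ (B - 1) := by
    conv_lhs => rw [show B = 1 + (B-1) by omega, pow_add, pow_one]
  have e3 : q ^ k = q * q ^ (k - 1) := by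
    conv_lhs => rw [show k = 1 + (k-1) by omega, pow_add, pow_one]
  have hh : q * (q ^ (A-1) + q ^ (B-1)) = q * (1 + q ^ (k-1)) := by
    rw [Nat.mul_add, Nat.mul_add, ← e1, ← e2, ← e3, mul_one]
    omega
  have := Nat.eq_of_mul_eq_mul_left (by omega : 0 < q) hh
  rcases aux_two_pow hq (by omega : 1 ≤ k - 1) this with ⟨h1, h2⟩ | ⟨h1, h2⟩
  · left; omega
  · right; omega

lemma aux_three_pow {q A B C k : ℕ} (hq : 2 ≤ q) (hk : 2 ≤ k)
    (h : q ^ A + q ^ B + q ^ C = 1 + q + q ^ k) :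
    (A = 0 ∧ B = 1 ∧ C = k) ∨ (A = 0 ∧ B = k ∧ C = 1) ∨ (A = 1 ∧ B = 0 ∧ C = k) ∨
    (A = 1 ∧ B = k ∧ C = 0) ∨ (A = k ∧ B = 0 ∧ C = 1) ∨ (A = k ∧ B = 1 ∧ C = 0) := by
  rcases Nat.eq_zero_or_pos A with hA | hA
  · subst hA
    simp only [pow_zero] at h
    have h' : q ^ B + q ^ C = q + q ^ k := by omega
    rcases aux_two_pow' hq hk h' with ⟨h1, h2⟩ | ⟨h1, h2⟩
    · exact Or.inl ⟨rfl, h1, h2⟩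
    · exact Or.inr (Or.inl ⟨rfl, h1, h2⟩)
  rcases Nat.eq_zero_or_pos B with hB | hB
  · subst hB
    simp only [pow_zero] at h
    have h' : q ^ A + q ^ C = q + q ^ k := by omega
    rcases aux_two_pow' hq hk h' with ⟨h1, h2⟩ | ⟨h1, h2⟩
    · exact Or.inr (Or.inr (Or.inl ⟨h1, rfl, h2⟩))
    · exact Or.inr (Or.inr (Or.inr (Or.inr (Or.inl ⟨h1, rfl, h2⟩))))
  rcases Nat.eq_zero_or_pos C with hC | hC
  · subst hC
    simp only [pow_zero] at h
    have h' : q ^ A + q ^ B = q + q ^ k := by omega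
    rcases aux_two_pow' hq hk h' with ⟨h1, h2⟩ | ⟨h1, h2⟩
    · exact Or.inr (Or.inr (Or.inr (Or.inl ⟨h1, h2, rfl⟩)))
    · exact Or.inr (Or.inr (Or.inr (Or.inr (Or.inr ⟨h1, h2, rfl⟩))))
  exfalso
  refine aux_dvd_one hq (dvd_add (dvd_add (dvd_pow_self q (by omega : A ≠ 0))
    (dvd_pow_self q (by omega : B ≠ 0))) (dvd_pow_self q (by omega : C ≠ 0)))
    (dvd_add (dvd_refl q) (dvd_pow_self q (by omega : k ≠ 0))) (by omega)
lemma aux_pow_shift {q : ℕ} (n t t' : ℕ) (h : t = t' + n ∨ t = t') :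
    ((q:ℤ) ^ n - 1) ∣ (q:ℤ) ^ t - (q:ℤ) ^ t' := by
  rcases h with rfl | rfl
  · exact ⟨(q:ℤ) ^ t', by ring⟩
  · simp
lemma aux_dvd_two {q n i j k : ℕ} (hq : 2 ≤ q) (hi : i < n) (hj : j < n) (hk1 : 1 ≤ k)
    (hk2 : k < n) :
    (q ^ n - 1 ∣ (q ^ i - 1) + (q ^ j - 1) * q ^ k) ↔
      ((i = 0 ∧ j = 0) ∨ (i = k ∧ j = n - k)) := by
  constructor
  · intro h
    have h1i : (1:ℕ) ≤ q ^ i := Nat.one_le_pow _ _ (by omega)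
    have h1j : (1:ℕ) ≤ q ^ j := Nat.one_le_pow _ _ (by omega)
    have h1n : (1:ℕ) ≤ q ^ n := Nat.one_le_pow _ _ (by omega)
    zify [h1i, h1j, h1n] at h
    set j2 := if j + k < n then j + k else j + k - n with hj2def
    have hsh : j + k = j2 + n ∨ j + k = j2 := by rw [hj2def]; split <;> omega
    have hj2 : j2 < n := by rw [hj2def]; split <;> omega
    have hE : ((q:ℤ) ^ n - 1) ∣ (q:ℤ) ^ i + (q:ℤ) ^ j2 - 1 - (q:ℤ) ^ k := by
      have hd := dvd_sub h (aux_pow_shift n (j + k) j2 hsh)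
      have e : ((q:ℤ) ^ i - 1 + ((q:ℤ) ^ j - 1) * (q:ℤ) ^ k) - ((q:ℤ) ^ (j + k) - (q:ℤ) ^ j2)
          = (q:ℤ) ^ i + (q:ℤ) ^ j2 - 1 - (q:ℤ) ^ k := by
        rw [pow_add]; ring
      rwa [e] at hd
    have hb : ∀ m : ℕ, m < n → (q:ℤ) ^ m ≤ (q:ℤ) ^ (n - 1) := fun m hm =>
      pow_le_pow_right₀ (by exact_mod_cast by omega) (by omega)
    have h2q : 2 * (q:ℤ) ^ (n - 1) ≤ (q:ℤ) ^ n := by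
      calc 2 * (q:ℤ) ^ (n-1) ≤ (q:ℤ) * (q:ℤ) ^ (n-1) := by
            apply mul_le_mul_of_nonneg_right (by exact_mod_cast hq) (by positivity)
      _ = (q:ℤ) ^ n := by rw [← pow_succ']; congr 1; omega
    have hq1 : (2:ℤ) ≤ (q:ℤ) := by exact_mod_cast hq
    have hqk : (2:ℤ) ≤ (q:ℤ) ^ k := by
      calc (2:ℤ) ≤ (q:ℤ) := hq1
      _ = (q:ℤ)^1 := (pow_one _).symm
      _ ≤ (q:ℤ)^k := pow_le_pow_right₀ (by omega) hk1
    have hpos : (0:ℤ) < (q:ℤ) ^ i := by positivity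
    have hpos2 : (0:ℤ) < (q:ℤ) ^ j2 := by positivity
    have hE0 : (q:ℤ) ^ i + (q:ℤ) ^ j2 - 1 - (q:ℤ) ^ k = 0 := by
      apply Int.eq_zero_of_abs_lt_dvd hE
      rw [abs_lt]
      constructor
      · have := hb k hk2
        nlinarith [hb i hi, hb j2 hj2]
      · nlinarith [hb i hi, hb j2 hj2]
    have hnat : q ^ i + q ^ j2 = 1 + q ^ k := by
      exact_mod_cast sub_eq_zero.mp
        (by linarith [hE0] : ((q:ℤ)^i + (q:ℤ)^j2) - (1 + (q:ℤ)^k) = 0)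
    rcases aux_two_pow hq hk1 hnat with ⟨h1, h2⟩ | ⟨h1, h2⟩
    · exact Or.inl ⟨h1, by omega⟩
    · exact Or.inr ⟨h1, by omega⟩
  · rintro (⟨h1, h2⟩ | ⟨h1, h2⟩) <;> simp only [h1, h2]
    · simp
    · have e1 : q ^ (n - k) * q ^ k = q ^ n := by rw [← pow_add]; congr 1; omega
      have e2 : (q ^ (n-k) - 1) * q ^ k = q ^ n - q ^ k := by rw [Nat.sub_mul, one_mul, e1]
      have h1k : (1:ℕ) ≤ q ^ k := Nat.one_le_pow _ _ (by omega)
      have hkn : q ^ k ≤ q ^ n := Nat.pow_le_pow_right (by omega) (by omega)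
      exact ⟨1, by omega⟩

lemma aux_dvd_three {q n i j l k : ℕ} (hq : 2 ≤ q) (hi : i < n) (hj : j < n) (hl : l < n)
    (hk1 : 2 ≤ k) (hk2 : k < n) :
    (q ^ n - 1 ∣ (q ^ i - 1) + (q ^ j - 1) * q + (q ^ l - 1) * q ^ k) ↔
      ((i = 0 ∧ j = 0 ∧ l = 0) ∨ (i = 0 ∧ j = k - 1 ∧ l = n - k + 1) ∨
       (i = 1 ∧ j = n - 1 ∧ l = 0) ∨ (i = 1 ∧ j = k - 1 ∧ l = n - k) ∨
       (i = k ∧ j = n - 1 ∧ l = n - k + 1) ∨ (i = k ∧ j = 0 ∧ l = n - k)) := by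
  have hn3 : 3 ≤ n := by omega
  constructor
  · intro h
    have h1i : (1:ℕ) ≤ q ^ i := Nat.one_le_pow _ _ (by omega)
    have h1j : (1:ℕ) ≤ q ^ j := Nat.one_le_pow _ _ (by omega)
    have h1l : (1:ℕ) ≤ q ^ l := Nat.one_le_pow _ _ (by omega)
    have h1n : (1:ℕ) ≤ q ^ n := Nat.one_le_pow _ _ (by omega)
    zify [h1i, h1j, h1l, h1n] at h
    set j2 := if j + 1 < n then j + 1 else j + 1 - n with hj2def
    have hshj : j + 1 = j2 + n ∨ j + 1 = j2 := by rw [hj2def]; split <;> omega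
    have hj2 : j2 < n := by rw [hj2def]; split <;> omega
    set l2 := if l + k < n then l + k else l + k - n with hl2def
    have hshl : l + k = l2 + n ∨ l + k = l2 := by rw [hl2def]; split <;> omega
    have hl2 : l2 < n := by rw [hl2def]; split <;> omega
    have hE : ((q:ℤ) ^ n - 1) ∣
        (q:ℤ) ^ i + (q:ℤ) ^ j2 + (q:ℤ) ^ l2 - 1 - (q:ℤ) - (q:ℤ) ^ k := by
      have hd := dvd_sub (dvd_sub h (aux_pow_shift n (j + 1) j2 hshj))
        (aux_pow_shift n (l + k) l2 hshl)
      have e : ((q:ℤ) ^ i - 1 + ((q:ℤ) ^ j - 1) * (q:ℤ) + ((q:ℤ) ^ l - 1) * (q:ℤ) ^ k)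
            - ((q:ℤ) ^ (j + 1) - (q:ℤ) ^ j2) - ((q:ℤ) ^ (l + k) - (q:ℤ) ^ l2)
          = (q:ℤ) ^ i + (q:ℤ) ^ j2 + (q:ℤ) ^ l2 - 1 - (q:ℤ) - (q:ℤ) ^ k := by
        rw [pow_add, pow_add]; ring
      rwa [e] at hd
    have hb : ∀ m : ℕ, m < n → (q:ℤ) ^ m ≤ (q:ℤ) ^ (n - 1) := fun m hm =>
      pow_le_pow_right₀ (by exact_mod_cast by omega) (by omega)
    have h2q : 2 * (q:ℤ) ^ (n - 1) ≤ (q:ℤ) ^ n := by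
      calc 2 * (q:ℤ) ^ (n-1) ≤ (q:ℤ) * (q:ℤ) ^ (n-1) := by
            apply mul_le_mul_of_nonneg_right (by exact_mod_cast hq) (by positivity)
      _ = (q:ℤ) ^ n := by rw [← pow_succ']; congr 1; omega
    have hq1 : (2:ℤ) ≤ (q:ℤ) := by exact_mod_cast hq
    have hqk : (2:ℤ) ≤ (q:ℤ) ^ k := by
      calc (2:ℤ) ≤ (q:ℤ) := hq1
      _ = (q:ℤ)^1 := (pow_one _).symm
      _ ≤ (q:ℤ)^k := pow_le_pow_right₀ (by omega) (by omega)
    have hqq : (q:ℤ) ≤ (q:ℤ) ^ (n-1) := by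
      calc (q:ℤ) = (q:ℤ)^1 := (pow_one _).symm
      _ ≤ (q:ℤ)^(n-1) := pow_le_pow_right₀ (by omega) (by omega)
    have hdpos : (0:ℤ) < (q:ℤ) ^ n - 1 := by
      have : (2:ℤ) ≤ (q:ℤ)^n := by
        calc (2:ℤ) ≤ (q:ℤ) := hq1
        _ = (q:ℤ)^1 := (pow_one _).symm
        _ ≤ (q:ℤ)^n := pow_le_pow_right₀ (by omega) (by omega)
      omega
    obtain ⟨c, hc⟩ := hE
    have hclb : (-1:ℤ) < c := by
      have hEq : ((q:ℤ)^n - 1) * (-1) < ((q:ℤ)^n - 1) * c := by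
        rw [← hc]
        have := hb i hi; have := hb j2 hj2; have := hb l2 hl2
        have h1 : (0:ℤ) < (q:ℤ)^i := by positivity
        have h2 : (0:ℤ) < (q:ℤ)^j2 := by positivity
        have h3 : (0:ℤ) < (q:ℤ)^l2 := by positivity
        have := hb k hk2
        nlinarith
      exact lt_of_mul_lt_mul_left hEq (by omega)
    have hcub : c < 2 := by
      have hEq : ((q:ℤ)^n - 1) * c < ((q:ℤ)^n - 1) * 2 := by
        rw [← hc]
        have := hb i hi; have := hb j2 hj2; have := hb l2 hl2
        nlinarith
      exact lt_of_mul_lt_mul_left hEq (by omega)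
    -- natural number facts for contradiction / conclusion
    have nb : ∀ m : ℕ, m < n → q ^ m ≤ q ^ (n - 1) := fun m hm =>
      Nat.pow_le_pow_right (by omega) (by omega)
    have n2q : 2 * q ^ (n - 1) ≤ q ^ n := by
      calc 2 * q ^ (n-1) ≤ q * q ^ (n-1) := Nat.mul_le_mul_right _ hq
      _ = q ^ n := by rw [← pow_succ']; congr 1; omega
    have nqk : 2 ≤ q ^ k := by
      calc 2 = 2^1 := rfl
      _ ≤ q ^ k := Nat.pow_le_pow_left hq 1 |>.trans (Nat.pow_le_pow_right (by omega) (by omega))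
    rcases (by omega : c = 0 ∨ c = 1) with rfl | rfl
    · -- E = 0
      rw [mul_zero] at hc
      have hnat : q ^ i + q ^ j2 + q ^ l2 = 1 + q + q ^ k := by
        exact_mod_cast sub_eq_zero.mp
          (by linarith [hc] : ((q:ℤ)^i + (q:ℤ)^j2 + (q:ℤ)^l2) - (1 + (q:ℤ) + (q:ℤ)^k) = 0)
      rcases aux_three_pow hq hk1 hnat with h' | h' | h' | h' | h' | h' <;>
        [exact Or.inl ⟨h'.1, by omega, by omega⟩;
         exact Or.inr (Or.inl ⟨h'.1, by omega, by omega⟩);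
         exact Or.inr (Or.inr (Or.inl ⟨h'.1, by omega, by omega⟩));
         exact Or.inr (Or.inr (Or.inr (Or.inl ⟨h'.1, by omega, by omega⟩)));
         exact Or.inr (Or.inr (Or.inr (Or.inr (Or.inl ⟨h'.1, by omega, by omega⟩))));
         exact Or.inr (Or.inr (Or.inr (Or.inr (Or.inr ⟨h'.1, by omega, by omega⟩))))]
    · -- E = q^n - 1 : contradiction
      exfalso
      rw [mul_one] at hc
      have hnat : q ^ i + q ^ j2 + q ^ l2 = q ^ n + q + q ^ k := by
        exact_mod_cast sub_eq_zero.mp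
          (by linarith [hc] : ((q:ℤ)^i + (q:ℤ)^j2 + (q:ℤ)^l2) - ((q:ℤ)^n + (q:ℤ) + (q:ℤ)^k) = 0)
      have hbi := nb i hi; have hbj := nb j2 hj2; have hbl := nb l2 hl2
      rcases Nat.eq_zero_or_pos i with hz | hipos
      · rw [hz, pow_zero] at hnat; omega
      rcases Nat.eq_zero_or_pos j2 with hz | hjpos
      · rw [hz, pow_zero] at hnat; omega
      rcases Nat.eq_zero_or_pos l2 with hz | hlpos
      · rw [hz, pow_zero] at hnat; omega
      -- all positive: divide by q
      have ei : q ^ i = q * q ^ (i-1) := by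
        conv_lhs => rw [show i = 1 + (i-1) by omega, pow_add, pow_one]
      have ej : q ^ j2 = q * q ^ (j2-1) := by
        conv_lhs => rw [show j2 = 1 + (j2-1) by omega, pow_add, pow_one]
      have el : q ^ l2 = q * q ^ (l2-1) := by
        conv_lhs => rw [show l2 = 1 + (l2-1) by omega, pow_add, pow_one]
      have en : q ^ n = q * q ^ (n-1) := by
        conv_lhs => rw [show n = 1 + (n-1) by omega, pow_add, pow_one]
      have ek : q ^ k = q * q ^ (k-1) := by
        conv_lhs => rw [show k = 1 + (k-1) by omega, pow_add, pow_one]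
      have hdiv : q ^ (i-1) + q ^ (j2-1) + q ^ (l2-1) = q ^ (n-1) + 1 + q ^ (k-1) := by
        apply Nat.eq_of_mul_eq_mul_left (show 0 < q by omega)
        rw [Nat.mul_add, Nat.mul_add, Nat.mul_add, Nat.mul_add, ← ei, ← ej, ← el, ← en, ← ek,
          mul_one]
        omega
      have nb2 : ∀ m : ℕ, m < n - 1 → q ^ m ≤ q ^ (n - 2) := fun m hm =>
        Nat.pow_le_pow_right (by omega) (by omega)
      have n2q2 : 2 * q ^ (n - 2) ≤ q ^ (n-1) := by
        calc 2 * q ^ (n-2) ≤ q * q ^ (n-2) := Nat.mul_le_mul_right _ hq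
        _ = q ^ (n-1) := by rw [← pow_succ']; congr 1; omega
      have nqk2 : 2 ≤ q ^ (k-1) := by
        calc 2 = 2^1 := rfl
        _ ≤ q ^ (k-1) := Nat.pow_le_pow_left hq 1 |>.trans
            (Nat.pow_le_pow_right (by omega) (by omega))
      have hbi2 := nb2 (i-1) (by omega); have hbj2 := nb2 (j2-1) (by omega)
      have hbl2 := nb2 (l2-1) (by omega)
      rcases Nat.eq_zero_or_pos (i-1) with hz | hipos2
      · rw [hz, pow_zero] at hdiv; omega
      rcases Nat.eq_zero_or_pos (j2-1) with hz | hjpos2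
      · rw [hz, pow_zero] at hdiv; omega
      rcases Nat.eq_zero_or_pos (l2-1) with hz | hlpos2
      · rw [hz, pow_zero] at hdiv; omega
      exact aux_dvd_one hq
        (dvd_add (dvd_add (dvd_pow_self q (show i - 1 ≠ 0 by omega))
            (dvd_pow_self q (show j2 - 1 ≠ 0 by omega)))
          (dvd_pow_self q (show l2 - 1 ≠ 0 by omega)))
        (dvd_add (dvd_pow_self q (show n - 1 ≠ 0 by omega))
          (dvd_pow_self q (show k - 1 ≠ 0 by omega)))
        (by omega)
  · -- backward: six explicit cases
    have h1n : (1:ℕ) ≤ q ^ n := Nat.one_le_pow _ _ (by omega)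
    have h1k : (1:ℕ) ≤ q ^ k := Nat.one_le_pow _ _ (by omega)
    have hkn : q ^ k ≤ q ^ n := Nat.pow_le_pow_right (by omega) (by omega)
    have hqn : q ≤ q ^ n := by
      calc q = q^1 := (pow_one _).symm
      _ ≤ q ^ n := Nat.pow_le_pow_right (by omega) (by omega)
    rintro (⟨h1, h2, h3⟩ | ⟨h1, h2, h3⟩ | ⟨h1, h2, h3⟩ | ⟨h1, h2, h3⟩ |
      ⟨h1, h2, h3⟩ | ⟨h1, h2, h3⟩) <;> simp only [h1, h2, h3, pow_zero, pow_one]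
    · simp
    · -- (0, k-1, n-k+1) : q*(q^n - 1)
      have e1 : q ^ (k-1) * q = q ^ k := by rw [← pow_succ]; congr 1; omega
      have e2 : q ^ (n-k+1) * q ^ k = q ^ n * q := by
        rw [← pow_add, ← pow_succ]; congr 1; omega
      have f1 : (q ^ (k-1) - 1) * q = q ^ k - q := by rw [Nat.sub_mul, one_mul, e1]
      have f2 : (q ^ (n-k+1) - 1) * q ^ k = q ^ n * q - q ^ k := by
        rw [Nat.sub_mul, one_mul, e2]
      have f3 : (q ^ n - 1) * q = q ^ n * q - q := by rw [Nat.sub_mul, one_mul]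
      have hqk' : q ≤ q ^ k := by
        calc q = q^1 := (pow_one _).symm
        _ ≤ q ^ k := Nat.pow_le_pow_right (by omega) (by omega)
      have hqnq : q ^ k ≤ q ^ n * q := le_trans hkn (Nat.le_mul_of_pos_right _ (by omega))
      exact ⟨q, by omega⟩
    · -- (1, n-1, 0) : q^n - 1
      have e1 : q ^ (n-1) * q = q ^ n := by rw [← pow_succ]; congr 1; omega
      have f1 : (q ^ (n-1) - 1) * q = q ^ n - q := by rw [Nat.sub_mul, one_mul, e1]
      exact ⟨1, by omega⟩
    · -- (1, k-1, n-k) : q^n - 1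
      have e1 : q ^ (k-1) * q = q ^ k := by rw [← pow_succ]; congr 1; omega
      have e2 : q ^ (n-k) * q ^ k = q ^ n := by rw [← pow_add]; congr 1; omega
      have f1 : (q ^ (k-1) - 1) * q = q ^ k - q := by rw [Nat.sub_mul, one_mul, e1]
      have f2 : (q ^ (n-k) - 1) * q ^ k = q ^ n - q ^ k := by rw [Nat.sub_mul, one_mul, e2]
      have hqk' : q ≤ q ^ k := by
        calc q = q^1 := (pow_one _).symm
        _ ≤ q ^ k := Nat.pow_le_pow_right (by omega) (by omega)
      exact ⟨1, by omega⟩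
    · -- (k, n-1, n-k+1) : (q^n-1)*(q+1)
      have e1 : q ^ (n-1) * q = q ^ n := by rw [← pow_succ]; congr 1; omega
      have e2 : q ^ (n-k+1) * q ^ k = q ^ n * q := by
        rw [← pow_add, ← pow_succ]; congr 1; omega
      have f1 : (q ^ (n-1) - 1) * q = q ^ n - q := by rw [Nat.sub_mul, one_mul, e1]
      have f2 : (q ^ (n-k+1) - 1) * q ^ k = q ^ n * q - q ^ k := by
        rw [Nat.sub_mul, one_mul, e2]
      have f3 : (q ^ n - 1) * (q + 1) = q ^ n * q + q ^ n - q - 1 := by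
        rw [Nat.sub_mul, one_mul, Nat.mul_add, mul_one]
        have : q + 1 ≤ q ^ n * q := by
          calc q + 1 ≤ 2 * q := by omega
          _ ≤ q ^ n * q := Nat.mul_le_mul_right _ (by omega)
        omega
      have hqnq : q ^ k ≤ q ^ n * q := le_trans hkn (Nat.le_mul_of_pos_right _ (by omega))
      exact ⟨q + 1, by omega⟩
    · -- (k, 0, n-k) : q^n - 1
      have e2 : q ^ (n-k) * q ^ k = q ^ n := by rw [← pow_add]; congr 1; omega
      have f2 : (q ^ (n-k) - 1) * q ^ k = q ^ n - q ^ k := by rw [Nat.sub_mul, one_mul, e2]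
      exact ⟨1, by omega⟩

lemma aux_T (F : Type) [Field F] [Fintype F] [DecidableEq F] (t : ℕ) :
    ∑ x ∈ Finset.univ.filter (fun x : F => x ≠ 0), x ^ t
      = if (Fintype.card F - 1) ∣ t then (-1 : F) else 0 := by
  rw [← FiniteField.sum_pow_units F t]
  have h1 : ∑ x ∈ Finset.univ.filter (fun x : F => x ≠ 0), x ^ t
      = ∑ x : {y : F // y ≠ 0}, (x : F) ^ t := by
    rw [Finset.sum_subtype]
    intro x; simp
  rw [h1]
  exact (Fintype.sum_equiv unitsEquivNeZero _ _ (fun u => by simp)).symm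

lemma aux_fiber (p N : ℕ) (hp : p.Prime) (F : Type) [Field F] [Fintype F] [DecidableEq F]
    [CharP F p] (hcard : Fintype.card F = p ^ N)
    (f : F → F) (hadd : ∀ x y : F, f (x + y) = f x + f y) (m : ℕ) :
    ∑ x ∈ Finset.univ.filter (fun x : F => x ≠ 0), (f x / x) ^ m
      = - ∑ y ∈ (Finset.univ.filter (fun x : F => x ≠ 0)).image (fun x => f x / x), y ^ m := by
  have hf0 : f 0 = 0 := by
    have := hadd 0 0
    rw [add_zero] at this
    exact add_eq_left.mp this.symm
  rw [Finset.sum_comp (fun y : F => y ^ m) (fun x : F => f x / x), ← Finset.sum_neg_distrib]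
  apply Finset.sum_congr rfl
  intro y hy
  obtain ⟨x0, hx0mem, hx0⟩ := Finset.mem_image.mp hy
  have hx0ne : x0 ≠ 0 := (Finset.mem_filter.mp hx0mem).2
  have hx0eq : f x0 = y * x0 := by
    rw [← hx0]; field_simp
  -- the subgroup
  have hneg : ∀ x : F, f (-x) = - f x := by
    intro x
    have := hadd x (-x)
    rw [add_neg_cancel, hf0] at this
    exact eq_neg_of_add_eq_zero_right this.symm
  let K : AddSubgroup F :=
    { carrier := {x : F | f x = y * x}
      zero_mem' := by simp [hf0]
      add_mem' := by
        intro u v hu hv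
        simp only [Set.mem_setOf_eq] at *
        rw [hadd, hu, hv, mul_add]
      neg_mem' := by
        intro u hu
        simp only [Set.mem_setOf_eq] at *
        rw [hneg, hu, mul_neg] }
  have hKmem : ∀ x : F, x ∈ K ↔ f x = y * x := fun x => Iff.rfl
  have hKdvd : Nat.card K ∣ Nat.card F := AddSubgroup.card_addSubgroup_dvd_card K
  letI : Fintype K := Fintype.ofFinite K
  have hKcard : Nat.card K = (Finset.univ.filter (fun x : F => f x = y * x)).card := by
    rw [Nat.card_eq_fintype_card]
    rw [← Fintype.card_subtype]
    apply Fintype.card_congr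
    exact Equiv.subtypeEquivRight (fun x => hKmem x)
  set Kf := Finset.univ.filter (fun x : F => f x = y * x) with hKf
  have h0K : (0 : F) ∈ Kf := by simp [hKf, hf0]
  have hx0K : x0 ∈ Kf := by simp [hKf, hx0eq]
  have hK2 : 2 ≤ Kf.card := Finset.one_lt_card.mpr ⟨0, h0K, x0, hx0K, (Ne.symm hx0ne)⟩
  have hpdvd : p ∣ Kf.card := by
    rw [← hKcard]
    have hdvd2 : Nat.card K ∣ p ^ N := by
      rw [← hcard, ← Nat.card_eq_fintype_card]; exact hKdvd
    obtain ⟨d, hd1, hd2⟩ := (Nat.dvd_prime_pow hp).mp hdvd2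
    have hd0 : d ≠ 0 := by
      rintro rfl
      rw [pow_zero] at hd2
      omega
    rw [hd2]
    exact dvd_pow_self p hd0
  have hfib : Finset.filter (fun x : F => (fun x : F => f x / x) x = y)
      (Finset.univ.filter (fun x : F => x ≠ 0)) = Kf.erase 0 := by
    ext z
    simp only [Finset.mem_filter, Finset.mem_univ, true_and, Finset.mem_erase, hKf]
    constructor
    · rintro ⟨hz, hzy⟩
      exact ⟨hz, by rw [← hzy]; field_simp⟩
    · rintro ⟨hz, hzy⟩
      refine ⟨hz, ?_⟩
      rw [hzy]; field_simp
  rw [hfib, Finset.card_erase_of_mem h0K]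
  have hcast : ((Kf.card - 1 : ℕ) : F) = -1 := by
    obtain ⟨c, hc⟩ := hpdvd
    have : ((Kf.card : ℕ) : F) = 0 := by
      rw [hc]
      push_cast
      rw [CharP.cast_eq_zero F p, zero_mul]
    rw [Nat.cast_sub (by omega)]
    rw [this]
    simp
  rw [nsmul_eq_mul, hcast]
  ring

lemma aux_expand (q n : ℕ) (F : Type) [Field F] (a : ℕ → F) (f : F → F)
    (hf : ∀ x : F, f x = ∑ i ∈ Finset.range n, a i * x ^ q ^ i)
    (hq : 1 ≤ q) (x : F) (hx : x ≠ 0) :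
    f x / x = ∑ i ∈ Finset.range n, a i * x ^ (q ^ i - 1) := by
  rw [hf, Finset.sum_div]
  apply Finset.sum_congr rfl
  intro i _
  rw [pow_sub₀ x hx (Nat.one_le_pow _ _ (by omega)), pow_one, mul_div_assoc, div_eq_mul_inv]

lemma aux_sum_point (n i0 j0 : ℕ) (hi0 : i0 < n) (hj0 : j0 < n) (F : Type) [Field F]
    (h : ℕ → ℕ → F) :
    ∑ i ∈ Finset.range n, ∑ j ∈ Finset.range n,
      (if i = i0 ∧ j = j0 then h i j else 0) = h i0 j0 := by
  rw [Finset.sum_eq_single i0]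
  · rw [Finset.sum_eq_single j0]
    · simp
    · intro b _ hb; rw [if_neg (by tauto)]
    · intro hcon; exact absurd (Finset.mem_range.mpr hj0) hcon
  · intro b _ hb
    apply Finset.sum_eq_zero
    intro j _
    rw [if_neg (by tauto)]
  · intro hcon; exact absurd (Finset.mem_range.mpr hi0) hcon

lemma aux_sum_point3 (n i0 j0 l0 : ℕ) (hi0 : i0 < n) (hj0 : j0 < n) (hl0 : l0 < n)
    (F : Type) [Field F] (h : ℕ → ℕ → ℕ → F) :
    ∑ i ∈ Finset.range n, ∑ j ∈ Finset.range n, ∑ l ∈ Finset.range n,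
      (if i = i0 ∧ j = j0 ∧ l = l0 then h i j l else 0) = h i0 j0 l0 := by
  rw [Finset.sum_eq_single i0]
  · rw [Finset.sum_eq_single j0]
    · rw [Finset.sum_eq_single l0]
      · simp
      · intro b _ hb; rw [if_neg (by tauto)]
      · intro hcon; exact absurd (Finset.mem_range.mpr hl0) hcon
    · intro b _ hb
      apply Finset.sum_eq_zero
      intro l _
      rw [if_neg (by tauto)]
    · intro hcon; exact absurd (Finset.mem_range.mpr hj0) hcon
  · intro b _ hb
    apply Finset.sum_eq_zero
    intro j _
    apply Finset.sum_eq_zero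
    intro l _
    rw [if_neg (by tauto)]
  · intro hcon; exact absurd (Finset.mem_range.mpr hi0) hcon

lemma aux_P1 (q n : ℕ) (F : Type) [Field F] [Fintype F] [DecidableEq F]
    (hq : 2 ≤ q) (hn : 1 ≤ n) (hF : Fintype.card F = q ^ n)
    (a : ℕ → F) (f : F → F)
    (hf : ∀ x : F, f x = ∑ i ∈ Finset.range n, a i * x ^ q ^ i) :
    ∑ x ∈ Finset.univ.filter (fun x : F => x ≠ 0), (f x / x) = - a 0 := by
  have e1 : ∑ x ∈ Finset.univ.filter (fun x : F => x ≠ 0), (f x / x)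
      = ∑ x ∈ Finset.univ.filter (fun x : F => x ≠ 0),
          ∑ i ∈ Finset.range n, a i * x ^ (q ^ i - 1) :=
    Finset.sum_congr rfl fun x hx =>
      aux_expand q n F a f hf (by omega) x (Finset.mem_filter.mp hx).2
  rw [e1, Finset.sum_comm]
  have e2 : ∀ i ∈ Finset.range n,
      ∑ x ∈ Finset.univ.filter (fun x : F => x ≠ 0), a i * x ^ (q ^ i - 1)
        = a i * (if (q ^ n - 1) ∣ (q ^ i - 1) then (-1:F) else 0) := fun i _ => by
    rw [← Finset.mul_sum, aux_T, hF]
  rw [Finset.sum_congr rfl e2]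
  rw [Finset.sum_eq_single 0]
  · rw [if_pos (by simp), mul_neg_one]
  · intro i hi hine
    rw [if_neg, mul_zero]
    intro hdvd
    have h1 : q ^ i < q ^ n := Nat.pow_lt_pow_right (by omega) (Finset.mem_range.mp hi)
    have h2 : 1 ≤ q ^ i := Nat.one_le_pow _ _ (by omega)
    have h3 : 2 ≤ q ^ i := by
      calc 2 = 2^1 := rfl
      _ ≤ q ^ i := Nat.pow_le_pow_left hq 1 |>.trans
          (Nat.pow_le_pow_right (by omega) (by omega))
    have := Nat.le_of_dvd (by omega) hdvd
    omega
  · intro hcon; exact absurd (Finset.mem_range.mpr (by omega)) hcon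
lemma aux_P2 (p e q n k : ℕ) (F : Type) [Field F] [Fintype F] [DecidableEq F] [CharP F p]
    (hp : p.Prime) (he : 1 ≤ e) (hqpe : q = p ^ e)
    (hk1 : 1 ≤ k) (hk2 : k < n) (hF : Fintype.card F = q ^ n)
    (a : ℕ → F) (f : F → F)
    (hf : ∀ x : F, f x = ∑ i ∈ Finset.range n, a i * x ^ q ^ i) :
    ∑ x ∈ Finset.univ.filter (fun x : F => x ≠ 0), (f x / x) ^ (q ^ k + 1)
      = -(a 0 * a 0 ^ q ^ k + a k * (a (n - k)) ^ q ^ k) := by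
  haveI : ExpChar F p := ExpChar.prime hp
  have hq : 2 ≤ q := by
    rw [hqpe]
    calc 2 = 2^1 := rfl
    _ ≤ p ^ e := Nat.pow_le_pow_left hp.two_le 1 |>.trans
        (Nat.pow_le_pow_right hp.pos he)
  have step1 : ∀ x ∈ Finset.univ.filter (fun x : F => x ≠ 0), (f x / x) ^ (q ^ k + 1)
      = ∑ i ∈ Finset.range n, ∑ j ∈ Finset.range n,
          (a i * a j ^ q ^ k) * x ^ ((q ^ i - 1) + (q ^ j - 1) * q ^ k) := by
    intro x hx
    have hx0 : x ≠ 0 := (Finset.mem_filter.mp hx).2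
    rw [pow_add, pow_one, aux_expand q n F a f hf (by omega) x hx0]
    have hfr : (∑ i ∈ Finset.range n, a i * x ^ (q ^ i - 1)) ^ q ^ k
        = ∑ j ∈ Finset.range n, (a j) ^ q ^ k * x ^ ((q ^ j - 1) * q ^ k) := by
      have hqk : q ^ k = p ^ (e * k) := by rw [hqpe, ← pow_mul]
      rw [hqk, sum_pow_char_pow]
      apply Finset.sum_congr rfl
      intro j _
      rw [mul_pow, ← pow_mul]
    rw [hfr, Finset.sum_mul_sum, Finset.sum_comm]
    apply Finset.sum_congr rfl
    intro i _
    apply Finset.sum_congr rfl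
    intro j _
    rw [pow_add]
    ring
  rw [Finset.sum_congr rfl step1, Finset.sum_comm]
  have step2 : ∀ i ∈ Finset.range n,
      ∑ x ∈ Finset.univ.filter (fun x : F => x ≠ 0), ∑ j ∈ Finset.range n,
          (a i * a j ^ q ^ k) * x ^ ((q ^ i - 1) + (q ^ j - 1) * q ^ k)
        = ∑ j ∈ Finset.range n, (a i * a j ^ q ^ k) *
            (if (q ^ n - 1) ∣ ((q ^ i - 1) + (q ^ j - 1) * q ^ k) then (-1:F) else 0) := by
    intro i _
    rw [Finset.sum_comm]
    exact Finset.sum_congr rfl fun j _ => by rw [← Finset.mul_sum, aux_T, hF]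
  rw [Finset.sum_congr rfl step2]
  have step3 : ∀ i ∈ Finset.range n, ∀ j ∈ Finset.range n,
      (a i * a j ^ q ^ k) *
          (if (q ^ n - 1) ∣ ((q ^ i - 1) + (q ^ j - 1) * q ^ k) then (-1:F) else 0)
        = (if i = 0 ∧ j = 0 then -(a i * a j ^ q ^ k) else 0)
          + (if i = k ∧ j = n - k then -(a i * a j ^ q ^ k) else 0) := by
    intro i hi j hj
    rw [if_congr (aux_dvd_two hq (Finset.mem_range.mp hi) (Finset.mem_range.mp hj) hk1 hk2)
      rfl rfl]
    by_cases h1 : i = 0 ∧ j = 0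
    · rw [if_pos (Or.inl h1), if_pos h1, if_neg (by omega)]
      ring
    by_cases h2 : i = k ∧ j = n - k
    · rw [if_pos (Or.inr h2), if_neg h1, if_pos h2]
      ring
    · rw [if_neg (by tauto), if_neg h1, if_neg h2]
      ring
  rw [Finset.sum_congr rfl (fun i hi => Finset.sum_congr rfl (fun j hj => step3 i hi j hj))]
  simp only [Finset.sum_add_distrib]
  rw [aux_sum_point n 0 0 (by omega) (by omega) F (fun i j => -(a i * a j ^ q ^ k)),
    aux_sum_point n k (n - k) (by omega) (by omega) F (fun i j => -(a i * a j ^ q ^ k))]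
  ring

set_option maxHeartbeats 2000000 in
lemma aux_P3 (p e q n k : ℕ) (F : Type) [Field F] [Fintype F] [DecidableEq F] [CharP F p]
    (hp : p.Prime) (he : 1 ≤ e) (hqpe : q = p ^ e)
    (hk1 : 2 ≤ k) (hk2 : k < n) (hF : Fintype.card F = q ^ n)
    (a : ℕ → F) (f : F → F)
    (hf : ∀ x : F, f x = ∑ i ∈ Finset.range n, a i * x ^ q ^ i) :
    ∑ x ∈ Finset.univ.filter (fun x : F => x ≠ 0), (f x / x) ^ (1 + q + q ^ k)
      = -(a 0 * a 0 ^ q * a 0 ^ q ^ k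
          + a 0 * a (k-1) ^ q * a (n-k+1) ^ q ^ k
          + a 1 * a (n-1) ^ q * a 0 ^ q ^ k
          + a 1 * a (k-1) ^ q * a (n-k) ^ q ^ k
          + a k * a (n-1) ^ q * a (n-k+1) ^ q ^ k
          + a k * a 0 ^ q * a (n-k) ^ q ^ k) := by
  haveI : ExpChar F p := ExpChar.prime hp
  have hq : 2 ≤ q := by
    rw [hqpe]
    calc 2 = 2^1 := rfl
    _ ≤ p ^ e := Nat.pow_le_pow_left hp.two_le 1 |>.trans (Nat.pow_le_pow_right hp.pos he)
  have step1 : ∀ x ∈ Finset.univ.filter (fun x : F => x ≠ 0), (f x / x) ^ (1 + q + q ^ k)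
      = ∑ i ∈ Finset.range n, ∑ j ∈ Finset.range n, ∑ l ∈ Finset.range n,
          (a i * a j ^ q * a l ^ q ^ k)
            * x ^ ((q ^ i - 1) + (q ^ j - 1) * q + (q ^ l - 1) * q ^ k) := by
    intro x hx
    have hx0 : x ≠ 0 := (Finset.mem_filter.mp hx).2
    rw [pow_add, pow_add, pow_one, aux_expand q n F a f hf (by omega) x hx0]
    have hfr1 : (∑ i ∈ Finset.range n, a i * x ^ (q ^ i - 1)) ^ q
        = ∑ j ∈ Finset.range n, (a j) ^ q * x ^ ((q ^ j - 1) * q) := by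
      have hqe : q = p ^ e := hqpe
      rw [hqe, sum_pow_char_pow]
      apply Finset.sum_congr rfl
      intro j _
      rw [mul_pow, ← pow_mul]
    have hfr2 : (∑ i ∈ Finset.range n, a i * x ^ (q ^ i - 1)) ^ q ^ k
        = ∑ l ∈ Finset.range n, (a l) ^ q ^ k * x ^ ((q ^ l - 1) * q ^ k) := by
      have hqk : q ^ k = p ^ (e * k) := by rw [hqpe, ← pow_mul]
      rw [hqk, sum_pow_char_pow]
      apply Finset.sum_congr rfl
      intro l _
      rw [mul_pow, ← pow_mul]
    rw [hfr1, hfr2]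
    rw [Finset.sum_mul_sum]
    rw [Finset.sum_mul]
    apply Finset.sum_congr rfl
    intro i _
    rw [Finset.sum_mul]
    apply Finset.sum_congr rfl
    intro j _
    rw [Finset.mul_sum]
    apply Finset.sum_congr rfl
    intro l _
    rw [pow_add, pow_add]
    ring
  rw [Finset.sum_congr rfl step1, Finset.sum_comm]
  have step2 : ∀ i ∈ Finset.range n,
      ∑ x ∈ Finset.univ.filter (fun x : F => x ≠ 0), ∑ j ∈ Finset.range n,
          ∑ l ∈ Finset.range n, (a i * a j ^ q * a l ^ q ^ k)
            * x ^ ((q ^ i - 1) + (q ^ j - 1) * q + (q ^ l - 1) * q ^ k)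
        = ∑ j ∈ Finset.range n, ∑ l ∈ Finset.range n, (a i * a j ^ q * a l ^ q ^ k) *
            (if (q ^ n - 1) ∣ ((q ^ i - 1) + (q ^ j - 1) * q + (q ^ l - 1) * q ^ k)
              then (-1:F) else 0) := by
    intro i _
    rw [Finset.sum_comm]
    apply Finset.sum_congr rfl
    intro j _
    rw [Finset.sum_comm]
    exact Finset.sum_congr rfl fun l _ => by rw [← Finset.mul_sum, aux_T, hF]
  rw [Finset.sum_congr rfl step2]
  have step3 : ∀ i ∈ Finset.range n, ∀ j ∈ Finset.range n, ∀ l ∈ Finset.range n,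
      (a i * a j ^ q * a l ^ q ^ k) *
          (if (q ^ n - 1) ∣ ((q ^ i - 1) + (q ^ j - 1) * q + (q ^ l - 1) * q ^ k)
            then (-1:F) else 0)
        = (if i = 0 ∧ j = 0 ∧ l = 0 then -(a i * a j ^ q * a l ^ q ^ k) else 0)
          + (if i = 0 ∧ j = k - 1 ∧ l = n - k + 1 then -(a i * a j ^ q * a l ^ q ^ k) else 0)
          + (if i = 1 ∧ j = n - 1 ∧ l = 0 then -(a i * a j ^ q * a l ^ q ^ k) else 0)
          + (if i = 1 ∧ j = k - 1 ∧ l = n - k then -(a i * a j ^ q * a l ^ q ^ k) else 0)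
          + (if i = k ∧ j = n - 1 ∧ l = n - k + 1 then -(a i * a j ^ q * a l ^ q ^ k) else 0)
          + (if i = k ∧ j = 0 ∧ l = n - k then -(a i * a j ^ q * a l ^ q ^ k) else 0) := by
    intro i hi j hj l hl
    rw [if_congr (aux_dvd_three hq (Finset.mem_range.mp hi) (Finset.mem_range.mp hj)
      (Finset.mem_range.mp hl) hk1 hk2) rfl rfl]
    by_cases h1 : i = 0 ∧ j = 0 ∧ l = 0
    · rw [if_pos (Or.inl h1), if_pos h1, if_neg (by omega), if_neg (by omega),
        if_neg (by omega), if_neg (by omega), if_neg (by omega)]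
      ring
    by_cases h2 : i = 0 ∧ j = k - 1 ∧ l = n - k + 1
    · rw [if_pos (Or.inr (Or.inl h2)), if_neg h1, if_pos h2, if_neg (by omega),
        if_neg (by omega), if_neg (by omega), if_neg (by omega)]
      ring
    by_cases h3 : i = 1 ∧ j = n - 1 ∧ l = 0
    · rw [if_pos (Or.inr (Or.inr (Or.inl h3))), if_neg h1, if_neg h2, if_pos h3,
        if_neg (by omega), if_neg (by omega), if_neg (by omega)]
      ring
    by_cases h4 : i = 1 ∧ j = k - 1 ∧ l = n - k
    · rw [if_pos (Or.inr (Or.inr (Or.inr (Or.inl h4)))), if_neg h1, if_neg h2, if_neg h3,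
        if_pos h4, if_neg (by omega), if_neg (by omega)]
      ring
    by_cases h5 : i = k ∧ j = n - 1 ∧ l = n - k + 1
    · rw [if_pos (Or.inr (Or.inr (Or.inr (Or.inr (Or.inl h5))))), if_neg h1, if_neg h2,
        if_neg h3, if_neg h4, if_pos h5, if_neg (by omega)]
      ring
    by_cases h6 : i = k ∧ j = 0 ∧ l = n - k
    · rw [if_pos (Or.inr (Or.inr (Or.inr (Or.inr (Or.inr h6))))), if_neg h1, if_neg h2,
        if_neg h3, if_neg h4, if_neg h5, if_pos h6]
      ring
    · rw [if_neg (by tauto), if_neg h1, if_neg h2, if_neg h3, if_neg h4, if_neg h5, if_neg h6]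
      ring
  rw [Finset.sum_congr rfl (fun i hi => Finset.sum_congr rfl (fun j hj =>
    Finset.sum_congr rfl (fun l hl => step3 i hi j hj l hl)))]
  simp only [Finset.sum_add_distrib]
  rw [aux_sum_point3 n 0 0 0 (by omega) (by omega) (by omega) F
      (fun i j l => -(a i * a j ^ q * a l ^ q ^ k)),
    aux_sum_point3 n 0 (k-1) (n-k+1) (by omega) (by omega) (by omega) F
      (fun i j l => -(a i * a j ^ q * a l ^ q ^ k)),
    aux_sum_point3 n 1 (n-1) 0 (by omega) (by omega) (by omega) F
      (fun i j l => -(a i * a j ^ q * a l ^ q ^ k)),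
    aux_sum_point3 n 1 (k-1) (n-k) (by omega) (by omega) (by omega) F
      (fun i j l => -(a i * a j ^ q * a l ^ q ^ k)),
    aux_sum_point3 n k (n-1) (n-k+1) (by omega) (by omega) (by omega) F
      (fun i j l => -(a i * a j ^ q * a l ^ q ^ k)),
    aux_sum_point3 n k 0 (n-k) (by omega) (by omega) (by omega) F
      (fun i j l => -(a i * a j ^ q * a l ^ q ^ k))]
  ring


set_option maxHeartbeats 2000000 in
/-- relations among the coefficients of two q-polynomials defining the same
linear set of PG(1,q^n). -/
theorem stmt_1 (p e n q : ℕ) (hp : p.Prime) (he : 0 < e) (hn : 0 < n) (hq : q = p ^ e)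
    (F : Type) [Field F] [Fintype F] (hF : Fintype.card F = q ^ n)
    (a b : ℕ → F) (f g : F → F)
    (hf : ∀ x : F, f x = ∑ i ∈ Finset.range n, a i * x ^ q ^ i)
    (hg : ∀ x : F, g x = ∑ i ∈ Finset.range n, b i * x ^ q ^ i)
    (hD : {y : F | ∃ x : F, x ≠ 0 ∧ f x / x = y} = {y : F | ∃ x : F, x ≠ 0 ∧ g x / x = y}) :
    a 0 = b 0 ∧
    (∀ k : ℕ, 1 ≤ k → k ≤ n - 1 →
      a k * (a (n - k)) ^ q ^ k = b k * (b (n - k)) ^ q ^ k) ∧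
    (∀ k : ℕ, 2 ≤ k → k ≤ n - 1 →
      a 1 * (a (k - 1)) ^ q * (a (n - k)) ^ q ^ k
          + a k * (a (n - 1)) ^ q * (a (n - k + 1)) ^ q ^ k
        = b 1 * (b (k - 1)) ^ q * (b (n - k)) ^ q ^ k
          + b k * (b (n - 1)) ^ q * (b (n - k + 1)) ^ q ^ k) := by
  classical
  have hq2 : 2 ≤ q := by
    rw [hq]
    calc 2 = 2^1 := rfl
    _ ≤ p ^ e := Nat.pow_le_pow_left hp.two_le 1 |>.trans (Nat.pow_le_pow_right hp.pos he)
  haveI hcharp : CharP F p := by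
    obtain ⟨r, hr⟩ := CharP.exists F
    haveI := hr
    have hrp : r.Prime := CharP.char_is_prime F r
    obtain ⟨m, -, hcard⟩ := FiniteField.card F r
    have hm := m.property
    have hdvd : r ∣ p := by
      have h1 : r ∣ q ^ n := by
        rw [← hF, hcard]
        exact dvd_pow_self r m.pos.ne'
      rw [hq, ← pow_mul] at h1
      exact hrp.dvd_of_dvd_pow h1
    have hrep : r = p := (Nat.prime_dvd_prime_iff_eq hrp hp).mp hdvd
    rwa [hrep] at hr
  haveI := Fact.mk hp
  haveI : ExpChar F p := ExpChar.prime hp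
  have hadd : ∀ (h : F → F) (c : ℕ → F),
      (∀ x : F, h x = ∑ i ∈ Finset.range n, c i * x ^ q ^ i) →
      ∀ x y : F, h (x + y) = h x + h y := by
    intro h c hc x y
    rw [hc, hc, hc, ← Finset.sum_add_distrib]
    apply Finset.sum_congr rfl
    intro i _
    have hpe : q ^ i = p ^ (e * i) := by rw [hq, ← pow_mul]
    rw [hpe, add_pow_char_pow, mul_add]
  have himg : ∀ (h : F → F),
      ↑((Finset.univ.filter (fun x : F => x ≠ 0)).image (fun x => h x / x))
        = {y : F | ∃ x : F, x ≠ 0 ∧ h x / x = y} := by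
    intro h
    rw [Finset.coe_image]
    ext y
    constructor
    · rintro ⟨x, hx, rfl⟩
      exact ⟨x, by simpa using hx, rfl⟩
    · rintro ⟨x, hx, hxy⟩
      exact ⟨x, by simp [hx], hxy⟩
  have hDf : (Finset.univ.filter (fun x : F => x ≠ 0)).image (fun x => f x / x)
      = (Finset.univ.filter (fun x : F => x ≠ 0)).image (fun x => g x / x) := by
    apply Finset.coe_injective
    rw [himg f, himg g, hD]
  have hcardp : Fintype.card F = p ^ (e * n) := by rw [hF, hq, ← pow_mul]
  have hP : ∀ m : ℕ,
      ∑ x ∈ Finset.univ.filter (fun x : F => x ≠ 0), (f x / x) ^ m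
        = ∑ x ∈ Finset.univ.filter (fun x : F => x ≠ 0), (g x / x) ^ m := by
    intro m
    rw [aux_fiber p (e*n) hp F hcardp f (hadd f a hf) m,
      aux_fiber p (e*n) hp F hcardp g (hadd g b hg) m, hDf]
  have hst1 : a 0 = b 0 := by
    have h1 := hP 1
    simp only [pow_one] at h1
    rw [aux_P1 q n F hq2 hn hF a f hf, aux_P1 q n F hq2 hn hF b g hg] at h1
    exact neg_injective h1
  have hst2 : ∀ k : ℕ, 1 ≤ k → k ≤ n - 1 →
      a k * a (n-k) ^ q ^ k = b k * b (n-k) ^ q ^ k := by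
    intro k h1 h2
    have hkn : k < n := by omega
    have h := hP (q ^ k + 1)
    rw [aux_P2 p e q n k F hp he hq h1 hkn hF a f hf,
      aux_P2 p e q n k F hp he hq h1 hkn hF b g hg] at h
    have h' := neg_injective h
    have h0 : a 0 * a 0 ^ q ^ k = b 0 * b 0 ^ q ^ k := by rw [hst1]
    linear_combination h' - h0
  refine ⟨hst1, hst2, ?_⟩
  intro k hk1 hk2
  have hkn : k < n := by omega
  have h := hP (1 + q + q ^ k)
  rw [aux_P3 p e q n k F hp he hq hk1 hkn hF a f hf,
    aux_P3 p e q n k F hp he hq hk1 hkn hF b g hg] at h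
  have h' := neg_injective h
  have ha0q : a 0 ^ q = b 0 ^ q := by rw [hst1]
  have ha0k : a 0 ^ q ^ k = b 0 ^ q ^ k := by rw [hst1]
  have e1 : a 0 * a 0 ^ q * a 0 ^ q ^ k = b 0 * b 0 ^ q * b 0 ^ q ^ k := by rw [hst1]
  have e3' : a 1 * a (n-1) ^ q = b 1 * b (n-1) ^ q := by
    have h3 := hst2 1 le_rfl (by omega)
    rwa [pow_one] at h3
  have e6' : a k * a (n-k) ^ q ^ k = b k * b (n-k) ^ q ^ k := hst2 k (by omega) (by omega)
  have e2' : a (k-1) ^ q * a (n-k+1) ^ q ^ k = b (k-1) ^ q * b (n-k+1) ^ q ^ k := by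
    have h0 := hst2 (k-1) (by omega) (by omega)
    have hidx : n - (k-1) = n - k + 1 := by omega
    rw [hidx] at h0
    have hqq : q ^ (k-1) * q = q ^ k := by rw [← pow_succ]; congr 1; omega
    calc a (k-1) ^ q * a (n-k+1) ^ q ^ k
        = (a (k-1) * a (n-k+1) ^ q ^ (k-1)) ^ q := by rw [mul_pow, ← pow_mul, hqq]
      _ = (b (k-1) * b (n-k+1) ^ q ^ (k-1)) ^ q := by rw [h0]
      _ = b (k-1) ^ q * b (n-k+1) ^ q ^ k := by rw [mul_pow, ← pow_mul, hqq]
  have E2 : a 0 * a (k-1) ^ q * a (n-k+1) ^ q ^ k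
      = b 0 * b (k-1) ^ q * b (n-k+1) ^ q ^ k := by
    linear_combination (a (k-1) ^ q * a (n-k+1) ^ q ^ k) * hst1 + b 0 * e2'
  have E3 : a 1 * a (n-1) ^ q * a 0 ^ q ^ k = b 1 * b (n-1) ^ q * b 0 ^ q ^ k := by
    linear_combination (a 1 * a (n-1) ^ q) * ha0k + (b 0 ^ q ^ k) * e3'
  have E6 : a k * a 0 ^ q * a (n-k) ^ q ^ k = b k * b 0 ^ q * b (n-k) ^ q ^ k := by
    linear_combination (a k * a (n-k) ^ q ^ k) * ha0q + (b 0 ^ q) * e6'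
  linear_combination h' - e1 - E2 - E3 - E6
end

section
/- Let n ≥ 2 and let a_0, a_1, ..., a_{n-1} ∈ F_{q^n} satisfy: a_0 = 1; a_k · a_{n-k}^{q^k} = 1 for every k with 1 ≤ k ≤ n-1; and a_1 · a_{k-1}^{q} · a_{n-k}^{q^k} + a_k · a_{n-1}^{q} · a_{n-k+1}^{q^k} = 2 for every k with 2 ≤ k ≤ n-1 (here 2 denotes 1+1 in F_{q^n}). Then a_i = a_1^{1+q+q^2+...+q^{i-1}} for every i with 1 ≤ i ≤ n-1, and N_{q^n/q}(a_1) = 1. -/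
/-- from the coefficient relations one deduces
`a_i = a_1^{1+q+...+q^{i-1}}` for `1 ≤ i ≤ n-1` and `N_{q^n/q}(a_1) = 1`. -/
theorem stmt_3 (p e n q : ℕ) (hp : p.Prime) (he : 0 < e) (hn : 2 ≤ n) (hq : q = p ^ e)
    (F : Type) [Field F] [Fintype F] (hF : Fintype.card F = q ^ n)
    (a : ℕ → F) (ha0 : a 0 = 1)
    (h1 : ∀ k : ℕ, 1 ≤ k → k ≤ n - 1 → a k * (a (n - k)) ^ q ^ k = 1)
    (h2 : ∀ k : ℕ, 2 ≤ k → k ≤ n - 1 →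
      a 1 * (a (k - 1)) ^ q * (a (n - k)) ^ q ^ k
        + a k * (a (n - 1)) ^ q * (a (n - k + 1)) ^ q ^ k = 2) :
    (∀ i : ℕ, 1 ≤ i → i ≤ n - 1 → a i = a 1 ^ (∑ j ∈ Finset.range i, q ^ j)) ∧
      a 1 ^ (∑ j ∈ Finset.range n, q ^ j) = 1 := by
  have step : ∀ k : ℕ, 2 ≤ k → k ≤ n - 1 → a k = a 1 * (a (k - 1)) ^ q := by
    intro k hk2 hk
    have e1 := h1 k (by omega) hk
    have e2 := h1 (k - 1) (by omega) (by omega)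
    have e3 := h1 1 le_rfl (by omega)
    have e4 := h2 k hk2 hk
    rw [show n - (k - 1) = n - k + 1 by omega] at e2
    have e2q : (a (k - 1)) ^ q * (a (n - k + 1)) ^ q ^ k = 1 := by
      have h := congrArg (· ^ q) e2
      simp only [mul_pow, one_pow, ← pow_mul] at h
      rwa [show q ^ (k - 1) * q = q ^ k by
        rw [← pow_succ]; congr 1; omega] at h
    rw [pow_one] at e3
    have hsq : (a 1 * (a (k - 1)) ^ q - a k) ^ 2 = 0 := by
      linear_combination (a 1 * (a (k - 1)) ^ q) * (a k) * e4
        - (a 1 * (a (k - 1)) ^ q) ^ 2 * e1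
        - a 1 * (a k) ^ 2 * (a (n - 1)) ^ q * e2q
        - (a k) ^ 2 * e3
    have := sub_eq_zero.mp ((pow_eq_zero_iff (two_ne_zero)).mp hsq)
    exact this.symm
  have key : ∀ i : ℕ, 1 ≤ i → i ≤ n - 1 → a i = a 1 ^ (∑ j ∈ Finset.range i, q ^ j) := by
    intro i
    induction i with
    | zero => omega
    | succ m ih =>
      intro h1m h2m
      rcases Nat.eq_or_lt_of_le h1m with h | h
      · simp [← h]
      · have hm1 : 1 ≤ m := by omega
        have hm2 : m ≤ n - 1 := by omega
        have hstep := step (m + 1) (by omega) h2m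
        rw [Nat.add_sub_cancel] at hstep
        rw [hstep, ih hm1 hm2, ← pow_mul, mul_comm, ← pow_succ]
        congr 1
        rw [Finset.sum_range_succ', pow_zero, Finset.sum_mul]
        simp [pow_succ]
  refine ⟨key, ?_⟩
  have e := h1 (n - 1) (by omega) le_rfl
  rw [show n - (n - 1) = 1 by omega, key (n - 1) (by omega) le_rfl, ← pow_add] at e
  rw [show n = (n - 1) + 1 by omega, Finset.sum_range_succ]
  exact e
end

section
/- Let f(x) = Σ_{i=0}^{n-1} a_i x^{q^i} be a q-polynomial over F_{q^n} with adjoint f̂, let A, B, C, D ∈ F_{q^n} with AD − BC ≠ 0, and let σ be the field automorphism x ↦ x^{p^k} of F_{q^n}. Then the invertible σ-semilinear map (x,y) ↦ (Ax^σ + By^σ, Cx^σ + Dy^σ) of F_{q^n} × F_{q^n} maps U_f onto U_{f̂} if and only if the following n equations hold (indices taken modulo n): C + D·a_0^σ − a_0·A = Σ_{i=0}^{n-1} (B·a_i·a_i^σ)^{q^{n-i}}, and for every m with 1 ≤ m ≤ n−1: D·a_m^σ − (a_{n−m}·A)^{q^m} = Σ_{i=0}^{n-1} (B·a_i·a_{i+m}^σ)^{q^{n-i}}.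 -/
open Finset Polynomial

set_option maxHeartbeats 1000000 in
/-- the invertible σ-semilinear map `(x,y) ↦ (Ax^σ + By^σ, Cx^σ + Dy^σ)`,
with `σ : x ↦ x^{p^k}`, maps `U_f` onto `U_{f̂}` if and only if the `n` listed equations
hold (indices of the coefficients taken modulo `n`). -/
theorem stmt_4 (p e n q : ℕ) (hp : p.Prime) (he : 0 < e) (hn : 0 < n) (hq : q = p ^ e)
    (F : Type) [Field F] [Fintype F] (hF : Fintype.card F = q ^ n)
    (a : ℕ → F) (f fhat : F → F)
    (hf : ∀ x : F, f x = ∑ i ∈ Finset.range n, a i * x ^ q ^ i)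
    (hfhat : ∀ x : F, fhat x = ∑ i ∈ Finset.range n, (a i) ^ q ^ (n - i) * x ^ q ^ (n - i))
    (A B C D : F) (hABCD : A * D - B * C ≠ 0) (k : ℕ) :
    (fun w : F × F =>
        (A * w.1 ^ p ^ k + B * w.2 ^ p ^ k, C * w.1 ^ p ^ k + D * w.2 ^ p ^ k)) ''
        {w : F × F | ∃ x : F, w = (x, f x)}
      = {w : F × F | ∃ x : F, w = (x, fhat x)}
    ↔ (C + D * (a 0) ^ p ^ k - a 0 * A
          = ∑ i ∈ Finset.range n, (B * a i * (a i) ^ p ^ k) ^ q ^ (n - i) ∧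
        ∀ m : ℕ, 1 ≤ m → m ≤ n - 1 →
          D * (a m) ^ p ^ k - (a (n - m) * A) ^ q ^ m
            = ∑ i ∈ Finset.range n, (B * a i * (a ((i + m) % n)) ^ p ^ k) ^ q ^ (n - i)) := by
  subst hq
  haveI : Fact p.Prime := ⟨hp⟩
  have hNpos : 0 < e * n := Nat.mul_pos he hn
  have hcard : Fintype.card F = p ^ (e * n) := by rw [hF, ← pow_mul]
  -- characteristic p
  have hchar : CharP F p := by
    obtain ⟨r, hr⟩ := CharP.exists F
    haveI := hr
    obtain ⟨d, hrp, hcardr⟩ := FiniteField.card F r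
    have h1 : p ∣ r ^ (d : ℕ) := by
      rw [← hcardr, hcard]
      exact dvd_pow_self p (by positivity)
    have : r = p := ((Nat.prime_dvd_prime_iff_eq hp hrp).mp (hp.dvd_of_dvd_pow h1)).symm
    subst this; exact hr
  haveI := hchar
  haveI : ExpChar F p := inferInstance
  -- power reduction lemmas
  have red : ∀ (z : F) (s : ℕ), z ^ p ^ s = z ^ p ^ (s % (e * n)) := by
    intro z s
    conv_lhs => rw [← Nat.div_add_mod s (e * n)]
    rw [pow_add, pow_mul, pow_mul, ← hcard, FiniteField.pow_card_pow]
  have pcard : ∀ z : F, z ^ (p ^ e) ^ n = z := by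
    intro z; rw [← hF, FiniteField.pow_card]
  -- mod arithmetic helpers
  have hmodinv : ∀ j < n, (n - (n - j) % n) % n = j := by
    intro j hj
    rcases Nat.eq_zero_or_pos j with rfl | hjpos
    · simp [Nat.mod_self]
    · rw [Nat.mod_eq_of_lt (show n - j < n by omega),
        Nat.mod_eq_of_lt (show n - (n - j) < n by omega)]
      omega
  have hmodsum : ∀ m < n, ∀ i < n, ((n - m) % n + (i + m) % n) % n = i := by
    intro m hm i hi
    calc ((n - m) % n + (i + m) % n) % n = (n - m + (i + m)) % n :=
          Nat.ModEq.add (Nat.mod_modEq _ _) (Nat.mod_modEq _ _)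
      _ = (n + i) % n := by rw [show n - m + (i + m) = n + i by omega]
      _ = i := by rw [Nat.add_mod_left, Nat.mod_eq_of_lt hi]
  have hmodE : ∀ i m : ℕ, ((k + e * i) % (e * n) + e * m) % (e * n)
      = (k + e * ((i + m) % n)) % (e * n) := by
    intro i m
    calc ((k + e * i) % (e * n) + e * m) % (e * n) = (k + e * i + e * m) % (e * n) :=
          Nat.ModEq.add_right _ (Nat.mod_modEq _ _)
      _ = (k + e * (i + m)) % (e * n) := by rw [mul_add, add_assoc]
      _ = (k + e * ((i + m) % n)) % (e * n) :=
          Nat.ModEq.add_left k ((Nat.mod_modEq (i + m) n).mul_left' e).symm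
  -- independence of the Frobenius powers
  have indep : ∀ c : ℕ → F,
      (∀ x : F, ∑ m ∈ range n, c m * x ^ p ^ ((k + e * m) % (e * n)) = 0) →
      ∀ m ∈ range n, c m = 0 := by
    intro c h
    have hp1 : 1 < p := hp.one_lt
    set P : F[X] := ∑ m ∈ range n, Polynomial.C (c m) * X ^ p ^ ((k + e * m) % (e * n)) with hP
    have hPdeg : P.natDegree < Fintype.card F := by
      rw [hcard]
      refine lt_of_le_of_lt (natDegree_sum_le _ _) ?_
      rw [Finset.fold_max_lt]
      refine ⟨by positivity, fun m hm => ?_⟩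
      refine lt_of_le_of_lt (natDegree_C_mul_le _ _) ?_
      simpa [natDegree_X_pow] using Nat.pow_lt_pow_right hp1 (Nat.mod_lt _ hNpos)
    have hP0 : P = 0 := by
      apply eq_zero_of_natDegree_lt_card_of_eval_eq_zero P Function.injective_id _ hPdeg
      intro x
      simpa [hP, eval_finset_sum] using h x
    intro m hm
    have hinj : ∀ m₁ < n, ∀ m₂ < n,
        (k + e * m₁) % (e * n) = (k + e * m₂) % (e * n) → m₁ = m₂ := by
      have key : ∀ m₁ m₂, m₁ ≤ m₂ → m₂ < n →
          (k + e * m₁) % (e * n) = (k + e * m₂) % (e * n) → m₁ = m₂ := by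
        intro m₁ m₂ hle hlt hmod
        have h1 : e * n ∣ (k + e * m₂) - (k + e * m₁) :=
          (Nat.modEq_iff_dvd' (by nlinarith)).mp hmod
        have h2 : (k + e * m₂) - (k + e * m₁) = e * (m₂ - m₁) := by
          rw [Nat.mul_sub]; omega
        rw [h2] at h1
        have h3 : e * (m₂ - m₁) < e * n := Nat.mul_lt_mul_left he |>.mpr (by omega)
        have h4 : e * (m₂ - m₁) = 0 := Nat.eq_zero_of_dvd_of_lt h1 h3
        have h5 : m₂ - m₁ = 0 := by
          rcases Nat.mul_eq_zero.mp h4 with h | h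
          · omega
          · exact h
        omega
      intro m₁ h₁ m₂ h₂ hmod
      rcases le_total m₁ m₂ with h | h
      · exact key m₁ m₂ h h₂ hmod
      · exact (key m₂ m₁ h h₁ hmod.symm).symm
    have := congrArg (fun Q => Polynomial.coeff Q (p ^ ((k + e * m) % (e * n)))) hP0
    simp only [hP, finset_sum_coeff, coeff_C_mul, coeff_X_pow, coeff_zero] at this
    rw [Finset.sum_eq_single m] at this
    · simpa using this
    · intro b hb hbm
      have hne : ¬ (p ^ ((k + e * m) % (e * n)) = p ^ ((k + e * b) % (e * n))) := fun hh =>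
        hbm <| hinj b (mem_range.mp hb) m (mem_range.mp hm)
          (Nat.pow_right_injective hp.two_le hh.symm)
      simp [hne]
    · intro hmm; exact (hmm hm).elim
  -- expansion of (f x) ^ p ^ k
  have hfσ : ∀ x : F, (f x) ^ p ^ k
      = ∑ i ∈ range n, (a i) ^ p ^ k * x ^ p ^ ((k + e * i) % (e * n)) := by
    intro x
    rw [hf, sum_pow_char_pow]
    refine Finset.sum_congr rfl fun i _ => ?_
    rw [mul_pow, ← pow_mul, ← pow_mul p e i, ← pow_add, red x (e * i + k),
      Nat.add_comm (e * i) k]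
  -- reindexed form of fhat
  have hfhat' : ∀ u : F, fhat u
      = ∑ m ∈ range n, (a ((n - m) % n)) ^ (p ^ e) ^ m * u ^ (p ^ e) ^ m := by
    intro u
    rw [hfhat]
    refine Finset.sum_nbij' (fun j => (n - j) % n) (fun m => (n - m) % n)
      (fun j _ => mem_range.mpr (Nat.mod_lt _ hn)) (fun j _ => mem_range.mpr (Nat.mod_lt _ hn))
      (fun j hj => hmodinv j (mem_range.mp hj)) (fun j hj => hmodinv j (mem_range.mp hj))
      (fun j hj => ?_)
    have hj' := mem_range.mp hj
    rw [hmodinv j hj']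
    rcases Nat.eq_zero_or_pos j with rfl | hjpos
    · simp only [Nat.sub_zero, Nat.mod_self, pow_zero, pow_one, pcard]
    · simp only [Nat.mod_eq_of_lt (show n - j < n by omega)]
  -- expansion of u ^ q ^ m
  have hu : ∀ (x : F) (m : ℕ), (A * x ^ p ^ k + B * (f x) ^ p ^ k) ^ (p ^ e) ^ m
      = A ^ (p ^ e) ^ m * x ^ p ^ ((k + e * m) % (e * n))
        + ∑ i ∈ range n,
            (B * (a i) ^ p ^ k) ^ (p ^ e) ^ m * x ^ p ^ ((k + e * ((i + m) % n)) % (e * n)) := by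
    intro x m
    rw [← pow_mul p e m, add_pow_char_pow]
    congr 1
    · rw [mul_pow, ← pow_mul, ← pow_add, red x (k + e * m)]
    · rw [hfσ, Finset.mul_sum, sum_pow_char_pow]
      refine Finset.sum_congr rfl fun i hi => ?_
      rw [← mul_assoc, mul_pow, ← pow_mul, ← pow_add, red x _, hmodE i m]
  -- left side expansion
  have keyL : ∀ x : F, C * x ^ p ^ k + D * (f x) ^ p ^ k
      = ∑ m ∈ range n,
          ((if m = 0 then C else 0) + D * (a m) ^ p ^ k) * x ^ p ^ ((k + e * m) % (e * n)) := by
    intro x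
    rw [hfσ x, Finset.mul_sum]
    simp only [add_mul, Finset.sum_add_distrib]
    congr 1
    · symm
      rw [Finset.sum_eq_single 0 (fun b _ hb0 => by rw [if_neg hb0, zero_mul])
          (fun h0 => absurd (mem_range.mpr hn) h0), if_pos rfl, mul_zero, add_zero, ← red x k]
    · exact Finset.sum_congr rfl fun m _ => by ring
  -- right side expansion
  have keyR : ∀ x : F, fhat (A * x ^ p ^ k + B * (f x) ^ p ^ k)
      = ∑ m ∈ range n,
          ((a ((n - m) % n) * A) ^ (p ^ e) ^ m
            + ∑ i ∈ range n, (B * a i * (a ((i + m) % n)) ^ p ^ k) ^ (p ^ e) ^ (n - i))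
          * x ^ p ^ ((k + e * m) % (e * n)) := by
    intro x
    rw [hfhat']
    simp only [hu x]
    simp only [mul_add, Finset.mul_sum, add_mul, Finset.sum_mul, Finset.sum_add_distrib]
    congr 1
    · exact Finset.sum_congr rfl fun m _ => by rw [mul_pow]; ring
    · rw [← Finset.sum_product', ← Finset.sum_product']
      refine Finset.sum_nbij' (fun z => ((z.2 + z.1) % n, (n - z.1) % n))
        (fun z => ((n - z.2) % n, (z.2 + z.1) % n)) ?_ ?_ ?_ ?_ ?_
      · rintro ⟨m, i⟩ hz
        simp only [Finset.mem_product, mem_range] at hz ⊢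
        exact ⟨Nat.mod_lt _ hn, Nat.mod_lt _ hn⟩
      · rintro ⟨m, i⟩ hz
        simp only [Finset.mem_product, mem_range] at hz ⊢
        exact ⟨Nat.mod_lt _ hn, Nat.mod_lt _ hn⟩
      · rintro ⟨m, i⟩ hz
        simp only [Finset.mem_product, mem_range] at hz
        obtain ⟨hm, hi⟩ := hz
        simp only [Prod.mk.injEq]
        exact ⟨hmodinv m hm, hmodsum m hm i hi⟩
      · rintro ⟨m, i⟩ hz
        simp only [Finset.mem_product, mem_range] at hz
        obtain ⟨hm, hi⟩ := hz
        simp only [Prod.mk.injEq]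
        constructor
        · rw [Nat.add_comm ((i + m) % n) ((n - i) % n), Nat.add_comm i m]
          exact hmodsum i hi m hm
        · exact hmodinv i hi
      · rintro ⟨m, i⟩ hz
        simp only [Finset.mem_product, mem_range] at hz
        obtain ⟨hm, hi⟩ := hz
        simp only []
        rw [hmodsum m hm i hi]
        rcases Nat.eq_zero_or_pos m with rfl | hmpos
        · simp only [Nat.sub_zero, Nat.mod_self, pow_zero, pow_one]
          rw [pcard]
          ring
        · rw [show n - (n - m) % n = m by
            rw [Nat.mod_eq_of_lt (show n - m < n by omega)]; omega]
          rw [mul_pow, mul_pow]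
          ring
  -- the coefficient function
  set c : ℕ → F := fun m =>
    ((if m = 0 then C else 0) + D * (a m) ^ p ^ k)
      - ((a ((n - m) % n) * A) ^ (p ^ e) ^ m
          + ∑ i ∈ range n, (B * a i * (a ((i + m) % n)) ^ p ^ k) ^ (p ^ e) ^ (n - i)) with hc
  have key : ∀ x : F,
      C * x ^ p ^ k + D * (f x) ^ p ^ k - fhat (A * x ^ p ^ k + B * (f x) ^ p ^ k)
        = ∑ m ∈ range n, c m * x ^ p ^ ((k + e * m) % (e * n)) := by
    intro x
    rw [keyL x, keyR x, ← Finset.sum_sub_distrib]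
    exact Finset.sum_congr rfl fun m _ => by rw [hc]; ring
  -- the functional identity
  have hPiff : (∀ x : F, C * x ^ p ^ k + D * (f x) ^ p ^ k
        = fhat (A * x ^ p ^ k + B * (f x) ^ p ^ k)) ↔ ∀ m ∈ range n, c m = 0 := by
    constructor
    · intro hP
      apply indep
      intro x
      rw [← key x, hP x, sub_self]
    · intro hc0 x
      have hk := key x
      rw [Finset.sum_eq_zero (fun m hm => by rw [hc0 m hm, zero_mul])] at hk
      exact sub_eq_zero.mp hk
  -- relating the coefficients to the stated equations
  have hsum0 : ∑ i ∈ range n, (B * a i * (a ((i + 0) % n)) ^ p ^ k) ^ (p ^ e) ^ (n - i)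
      = ∑ i ∈ range n, (B * a i * (a i) ^ p ^ k) ^ (p ^ e) ^ (n - i) :=
    Finset.sum_congr rfl fun i hi => by
      rw [Nat.add_zero, Nat.mod_eq_of_lt (mem_range.mp hi)]
  have hceq : (∀ m ∈ range n, c m = 0) ↔
      (C + D * (a 0) ^ p ^ k - a 0 * A
          = ∑ i ∈ Finset.range n, (B * a i * (a i) ^ p ^ k) ^ (p ^ e) ^ (n - i) ∧
        ∀ m : ℕ, 1 ≤ m → m ≤ n - 1 →
          D * (a m) ^ p ^ k - (a (n - m) * A) ^ (p ^ e) ^ m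
            = ∑ i ∈ Finset.range n, (B * a i * (a ((i + m) % n)) ^ p ^ k) ^ (p ^ e) ^ (n - i)) := by
    constructor
    · intro h
      constructor
      · have h0 := h 0 (mem_range.mpr hn)
        rw [hc] at h0
        simp only [if_pos rfl, if_true, eq_self_iff_true, Nat.sub_zero, Nat.mod_self, pow_zero, pow_one, hsum0] at h0
        linear_combination h0
      · intro m h1m hmn
        have hm := h m (mem_range.mpr (by omega))
        rw [hc] at hm
        simp only [if_neg (show m ≠ 0 by omega), zero_add] at hm
        rw [Nat.mod_eq_of_lt (show n - m < n by omega)] at hm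
        linear_combination hm
    · rintro ⟨h0, hm⟩ m hmem
      have hmlt := mem_range.mp hmem
      rw [hc]
      rcases Nat.eq_zero_or_pos m with rfl | hmpos
      · simp only [if_pos rfl, if_true, eq_self_iff_true, Nat.sub_zero, Nat.mod_self, pow_zero, pow_one, hsum0]
        linear_combination h0
      · simp only [if_neg (show m ≠ 0 by omega), zero_add]
        rw [Nat.mod_eq_of_lt (show n - m < n by omega)]
        linear_combination hm m hmpos (by omega)
  -- fhat 0 = 0
  have fhat0 : fhat 0 = 0 := by
    rw [hfhat]
    refine Finset.sum_eq_zero fun i hi => ?_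
    rw [zero_pow (pow_ne_zero _ (pow_ne_zero _ hp.pos.ne')), mul_zero]
  -- f is additive w.r.t. subtraction
  have hfsub : ∀ x y : F, f (x - y) = f x - f y := by
    intro x y
    rw [hf, hf, hf, ← Finset.sum_sub_distrib]
    refine Finset.sum_congr rfl fun i _ => ?_
    rw [← pow_mul p e i, sub_pow_char_pow, mul_sub]
  -- set equality iff functional identity
  have hset : ((fun w : F × F =>
        (A * w.1 ^ p ^ k + B * w.2 ^ p ^ k, C * w.1 ^ p ^ k + D * w.2 ^ p ^ k)) ''
        {w : F × F | ∃ x : F, w = (x, f x)}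
      = {w : F × F | ∃ x : F, w = (x, fhat x)}) ↔
      (∀ x : F, C * x ^ p ^ k + D * (f x) ^ p ^ k
        = fhat (A * x ^ p ^ k + B * (f x) ^ p ^ k)) := by
    constructor
    · intro hEq x
      have hx : (A * x ^ p ^ k + B * (f x) ^ p ^ k, C * x ^ p ^ k + D * (f x) ^ p ^ k)
          ∈ {w : F × F | ∃ y : F, w = (y, fhat y)} := by
        rw [← hEq]
        exact ⟨(x, f x), ⟨x, rfl⟩, rfl⟩
      obtain ⟨y, hy⟩ := hx
      rw [Prod.mk.injEq] at hy
      rw [hy.2, hy.1]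
    · intro hP
      have g_inj : Function.Injective
          (fun x : F => A * x ^ p ^ k + B * (f x) ^ p ^ k) := by
        intro x y hxy
        simp only [] at hxy
        have hz : A * (x - y) ^ p ^ k + B * (f (x - y)) ^ p ^ k = 0 := by
          rw [hfsub, sub_pow_char_pow, sub_pow_char_pow]
          linear_combination hxy
        have h2 : C * (x - y) ^ p ^ k + D * (f (x - y)) ^ p ^ k = 0 := by
          rw [hP (x - y), hz, fhat0]
        have h3 : (A * D - B * C) * (x - y) ^ p ^ k = 0 := by
          linear_combination D * hz - B * h2
        have h4 : (x - y) ^ p ^ k = 0 := by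
          rcases mul_eq_zero.mp h3 with h | h
          · exact absurd h hABCD
          · exact h
        have h5 : x - y = 0 := pow_eq_zero_iff (pow_ne_zero _ hp.pos.ne') |>.mp h4
        exact sub_eq_zero.mp h5
      have g_surj : Function.Surjective
          (fun x : F => A * x ^ p ^ k + B * (f x) ^ p ^ k) :=
        Finite.injective_iff_surjective.mp g_inj
      apply Set.eq_of_subset_of_subset
      · rintro w ⟨w', ⟨x, rfl⟩, rfl⟩
        exact ⟨A * x ^ p ^ k + B * (f x) ^ p ^ k, by
          show _ = _
          rw [Prod.mk.injEq]
          exact ⟨rfl, hP x⟩⟩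
      · rintro w ⟨y, rfl⟩
        obtain ⟨x, hx⟩ := g_surj y
        simp only [] at hx
        refine ⟨(x, f x), ⟨x, rfl⟩, ?_⟩
        show (A * x ^ p ^ k + B * (f x) ^ p ^ k, C * x ^ p ^ k + D * (f x) ^ p ^ k) = (y, fhat y)
        rw [Prod.mk.injEq]
        exact ⟨hx, by rw [hP x, hx]⟩
  exact hset.trans (hPiff.trans hceq)
end

section
/- Let q = p^e > 4 be a prime power, let n ≥ 5, let δ be a generator of the multiplicative group of F_{q^n}, and let f(x) = δx^q + x^{q^{n-1}}, so that its adjoint is f̂(x) = x^q + δ^{q^{n-1}} x^{q^{n-1}}. Then there exist no A, B, C, D ∈ F_{q^n} with AD − BC ≠ 0 and no integer k ≥ 0 such that the map (x,y) ↦ (Ax^{p^k} + By^{p^k}, Cx^{p^k} + Dy^{p^k}) of F_{q^n} × F_{q^n} maps U_f onto U_{f̂}; that is, no invertible semilinear map of F_{q^n} × F_{q^n} carries U_f to U_{f̂}. (Since L_f = L_{f̂}, this shows the linear set L_f is not simple.) -/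
open Polynomial

/-- for `q > 4`, `n ≥ 5` and `δ` a generator of the multiplicative group of
`F_{q^n}`, no invertible semilinear map of `F_{q^n} × F_{q^n}` carries `U_f` to `U_{f̂}`,
where `f(x) = δx^q + x^{q^(n-1)}`. -/
theorem stmt_5 (p e n q : ℕ) (hp : p.Prime) (he : 0 < e) (hn : 5 ≤ n) (hq : q = p ^ e)
    (hq4 : 4 < q)
    (F : Type) [Field F] [Fintype F] (hF : Fintype.card F = q ^ n)
    (δ : F) (hδ0 : δ ≠ 0) (hδgen : ∀ x : F, x ≠ 0 → ∃ m : ℕ, δ ^ m = x)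
    (f fhat : F → F)
    (hf : ∀ x : F, f x = δ * x ^ q + x ^ q ^ (n - 1))
    (hfhat : ∀ x : F, fhat x = x ^ q + δ ^ q ^ (n - 1) * x ^ q ^ (n - 1)) :
    ¬ ∃ (A B C D : F) (k : ℕ), A * D - B * C ≠ 0 ∧
      (fun w : F × F =>
          (A * w.1 ^ p ^ k + B * w.2 ^ p ^ k, C * w.1 ^ p ^ k + D * w.2 ^ p ^ k)) ''
          {w : F × F | ∃ x : F, w = (x, f x)}
        = {w : F × F | ∃ x : F, w = (x, fhat x)} := by
  classical
  rintro ⟨A, B, C, D, k, hdet, hset⟩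
  have hq1 : 1 < q := by omega
  have hq2 : 2 ≤ q := by omega
  have hp2 : 2 ≤ p := hp.two_le
  have hen : 0 < e * n := by positivity
  -- the characteristic of F is p
  haveI : Fact (ringChar F).Prime := ⟨CharP.char_is_prime F (ringChar F)⟩
  obtain ⟨m, hmp, hm⟩ := FiniteField.card F (ringChar F)
  have hpr : p = ringChar F := by
    have hdvd : p ∣ ringChar F ^ (m : ℕ) := by
      rw [← hm, hF, hq, ← pow_mul]
      exact dvd_pow_self p (by omega)
    exact ((Nat.prime_dvd_prime_iff_eq hp hmp).mp
      (hp.dvd_of_dvd_pow hdvd))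
  haveI : Fact p.Prime := ⟨hp⟩
  haveI : CharP F p := by rw [hpr]; exact ringChar.charP F
  -- basic power manipulations
  have hcard : ∀ y : F, y ^ q ^ n = y := by
    intro y; rw [← hF, FiniteField.pow_card]
  have hqadd : ∀ (a b : F) (i : ℕ), (a + b) ^ q ^ i = a ^ q ^ i + b ^ q ^ i := by
    intro a b i
    rw [hq, ← pow_mul, add_pow_char_pow]
  have hqadd1 : ∀ a b : F, (a + b) ^ q = a ^ q + b ^ q := by
    intro a b
    have := hqadd a b 1
    simpa using this
  have e1 : ∀ y : F, (y ^ q) ^ q = y ^ q ^ 2 := by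
    intro y; rw [← pow_mul, sq]
  have e2 : ∀ y : F, (y ^ q ^ (n - 1)) ^ q = y := by
    intro y
    rw [← pow_mul, ← pow_succ, Nat.sub_add_cancel (by omega), hcard]
  have e3 : ∀ y : F, (y ^ q) ^ q ^ (n - 1) = y := by
    intro y
    rw [← pow_mul, mul_comm, ← pow_succ, Nat.sub_add_cancel (by omega), hcard]
  have e4 : ∀ y : F, (y ^ q ^ (n - 1)) ^ q ^ (n - 1) = y ^ q ^ (n - 2) := by
    intro y
    rw [← pow_mul, ← pow_add]
    have : (n - 1) + (n - 1) = n + (n - 2) := by omega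
    rw [this, pow_add, pow_mul, hcard]
  -- Frobenius iterate x ↦ x ^ p ^ k is surjective
  have hsurj : Function.Surjective (fun x : F => x ^ p ^ k) := by
    have hinj : Function.Injective (fun x : F => x ^ p ^ k) := by
      intro a b hab
      have h0 : (a - b) ^ p ^ k = 0 := by
        rw [sub_pow_char_pow]
        simpa using sub_eq_zero_of_eq hab
      have := pow_eq_zero_iff (n := p ^ k) (by positivity) |>.mp h0
      exact sub_eq_zero.mp this
    exact Finite.surjective_of_injective hinj
  -- extract the functional equation
  have key : ∀ y : F,
      C * y + D * (δ ^ p ^ k * y ^ q + y ^ q ^ (n - 1)) =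
        (A * y + B * (δ ^ p ^ k * y ^ q + y ^ q ^ (n - 1))) ^ q +
          δ ^ q ^ (n - 1) *
            (A * y + B * (δ ^ p ^ k * y ^ q + y ^ q ^ (n - 1))) ^ q ^ (n - 1) := by
    intro y
    obtain ⟨x, rfl⟩ := hsurj y
    have hmem : ((x : F), f x) ∈ {w : F × F | ∃ x : F, w = (x, f x)} := ⟨x, rfl⟩
    have himg := Set.mem_image_of_mem
      (fun w : F × F =>
        (A * w.1 ^ p ^ k + B * w.2 ^ p ^ k, C * w.1 ^ p ^ k + D * w.2 ^ p ^ k)) hmem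
    rw [hset] at himg
    obtain ⟨y', hy'⟩ := himg
    simp only [Prod.mk.injEq] at hy'
    obtain ⟨hy1, hy2⟩ := hy'
    -- (f x) ^ p ^ k expansion
    have hfx : (f x) ^ p ^ k = δ ^ p ^ k * (x ^ p ^ k) ^ q + (x ^ p ^ k) ^ q ^ (n - 1) := by
      rw [hf, add_pow_char_pow, mul_pow, ← pow_mul, ← pow_mul, ← pow_mul, ← pow_mul,
        mul_comm q (p ^ k), mul_comm (q ^ (n - 1)) (p ^ k)]
    have h2 : C * x ^ p ^ k + D * (f x) ^ p ^ k = fhat y' := hy2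
    rw [← hy1, hfhat, hfx] at h2
    simpa using h2
  -- the five-term linearized identity
  have key2 : ∀ y : F,
      (B ^ q + δ ^ q ^ (n - 1) * B ^ q ^ (n - 1) * (δ ^ p ^ k) ^ q ^ (n - 1) - C) * y ^ q ^ 0
        + (A ^ q - D * δ ^ p ^ k) * y ^ q ^ 1
        + (B ^ q * (δ ^ p ^ k) ^ q) * y ^ q ^ 2
        + (δ ^ q ^ (n - 1) * B ^ q ^ (n - 1)) * y ^ q ^ (n - 2)
        + (δ ^ q ^ (n - 1) * A ^ q ^ (n - 1) - D) * y ^ q ^ (n - 1) = 0 := by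
    intro y
    have h := key y
    rw [hqadd1, hqadd _ _ (n - 1), mul_pow, mul_pow, mul_pow, mul_pow,
      hqadd1, hqadd _ _ (n - 1), mul_pow, mul_pow,
      e1, e2, e3, e4] at h
    simp only [pow_zero, pow_one]
    linear_combination -h
  -- turn it into a polynomial identity
  set c0 : F := B ^ q + δ ^ q ^ (n - 1) * B ^ q ^ (n - 1) * (δ ^ p ^ k) ^ q ^ (n - 1) - C with hc0
  set c1 : F := A ^ q - D * δ ^ p ^ k with hc1
  set c2 : F := B ^ q * (δ ^ p ^ k) ^ q with hc2
  set c3 : F := δ ^ q ^ (n - 1) * B ^ q ^ (n - 1) with hc3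
  set c4 : F := δ ^ q ^ (n - 1) * A ^ q ^ (n - 1) - D with hc4
  set P : F[X] := Polynomial.C c0 * X ^ q ^ 0 + Polynomial.C c1 * X ^ q ^ 1
      + Polynomial.C c2 * X ^ q ^ 2 + Polynomial.C c3 * X ^ q ^ (n - 2)
      + Polynomial.C c4 * X ^ q ^ (n - 1) with hP
  have hPdeg : P.natDegree < Fintype.card F := by
    rw [hF]
    have hb : ∀ (c : F) (i : ℕ), i ≤ n - 1 →
        (Polynomial.C c * X ^ q ^ i : F[X]).natDegree ≤ q ^ (n - 1) := by
      intro c i hi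
      calc (Polynomial.C c * X ^ q ^ i : F[X]).natDegree
          ≤ (X ^ q ^ i : F[X]).natDegree := natDegree_C_mul_le c _
        _ = q ^ i := natDegree_X_pow _
        _ ≤ q ^ (n - 1) := Nat.pow_le_pow_right (by omega) hi
    have h1 := hb c0 0 (by omega)
    have h2 := hb c1 1 (by omega)
    have h3 := hb c2 2 (by omega)
    have h4 := hb c3 (n - 2) (by omega)
    have h5 := hb c4 (n - 1) (by omega)
    have hle : P.natDegree ≤ q ^ (n - 1) := by
      refine le_trans (natDegree_add_le _ _) (max_le ?_ h5)
      refine le_trans (natDegree_add_le _ _) (max_le ?_ h4)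
      refine le_trans (natDegree_add_le _ _) (max_le ?_ h3)
      exact le_trans (natDegree_add_le _ _) (max_le h1 h2)
    calc P.natDegree ≤ q ^ (n - 1) := hle
      _ < q ^ n := Nat.pow_lt_pow_right hq1 (by omega)
  have hP0 : P = 0 := by
    apply eq_zero_of_natDegree_lt_card_of_eval_eq_zero P Function.injective_id _ hPdeg
    intro y
    simp only [hP, eval_add, eval_mul, eval_pow, eval_C, eval_X, id]
    exact key2 y
  -- extract coefficients
  have hpowinj : ∀ i j : ℕ, q ^ i = q ^ j → i = j :=
    fun i j h => Nat.pow_right_injective hq2 h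
  have hcoeff : ∀ j : ℕ, P.coeff (q ^ j) =
      (if q ^ j = q ^ 0 then c0 else 0) + (if q ^ j = q ^ 1 then c1 else 0)
      + (if q ^ j = q ^ 2 then c2 else 0) + (if q ^ j = q ^ (n - 2) then c3 else 0)
      + (if q ^ j = q ^ (n - 1) then c4 else 0) := by
    intro j
    simp only [hP, coeff_add, coeff_C_mul, coeff_X_pow, mul_ite, mul_one, mul_zero]
  have hcoeff0 : ∀ j : ℕ, P.coeff (q ^ j) = 0 := by
    intro j; rw [hP0]; simp
  have hne : ∀ i j : ℕ, i ≠ j → ¬ (q ^ i = q ^ j) :=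
    fun i j hij h' => hij (hpowinj i j h')
  have hc2eq : c2 = 0 := by
    have h := (hcoeff 2).symm.trans (hcoeff0 2)
    rw [if_neg (hne 2 0 (by omega)), if_neg (hne 2 1 (by omega)), if_pos rfl,
      if_neg (hne 2 (n - 2) (by omega)), if_neg (hne 2 (n - 1) (by omega))] at h
    simpa using h
  have hc1eq : c1 = 0 := by
    have h := (hcoeff 1).symm.trans (hcoeff0 1)
    rw [if_neg (hne 1 0 (by omega)), if_pos rfl, if_neg (hne 1 2 (by omega)),
      if_neg (hne 1 (n - 2) (by omega)), if_neg (hne 1 (n - 1) (by omega))] at h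
    simpa using h
  have hc4eq : c4 = 0 := by
    have h := (hcoeff (n - 1)).symm.trans (hcoeff0 (n - 1))
    rw [if_neg (hne (n - 1) 0 (by omega)), if_neg (hne (n - 1) 1 (by omega)),
      if_neg (hne (n - 1) 2 (by omega)), if_neg (hne (n - 1) (n - 2) (by omega)),
      if_pos rfl] at h
    simpa using h
  -- B = 0
  have hB : B = 0 := by
    rw [hc2] at hc2eq
    rcases mul_eq_zero.mp hc2eq with h | h
    · exact pow_eq_zero_iff (by omega) |>.mp h
    · exact absurd (pow_eq_zero_iff (by omega) |>.mp h) (pow_ne_zero _ hδ0)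
  have hA0 : A ≠ 0 := fun h => hdet (by rw [hB, h]; ring)
  -- combine the coefficient equations
  have hcomb : A ^ q = δ ^ q ^ (n - 1) * A ^ q ^ (n - 1) * δ ^ p ^ k := by
    have h1 : A ^ q = D * δ ^ p ^ k := by
      have h := hc1eq; rw [hc1, sub_eq_zero] at h; exact h
    have h4 : δ ^ q ^ (n - 1) * A ^ q ^ (n - 1) = D := by
      have h := hc4eq; rw [hc4, sub_eq_zero] at h; exact h
    rw [h1, ← h4]
  obtain ⟨a, ha⟩ := hδgen A hA0
  have hfield : δ ^ (a * q) = δ ^ (q ^ (n - 1) + (a * q ^ (n - 1) + p ^ k)) := by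
    rw [pow_mul, pow_add, pow_add, pow_mul, ha, hcomb]
    ring
  -- pass to the unit group and discrete logarithms
  set u : Fˣ := Units.mk0 δ hδ0 with hu
  have huval : ∀ m : ℕ, ((u ^ m : Fˣ) : F) = δ ^ m := fun m => by
    rw [Units.val_pow_eq_pow_val]; rfl
  have hgen : ∀ v : Fˣ, v ∈ Subgroup.zpowers u := by
    intro v
    obtain ⟨m', hm'⟩ := hδgen v.val v.ne_zero
    rw [Subgroup.mem_zpowers_iff]
    exact ⟨(m' : ℤ), Units.ext (by rw [zpow_natCast, huval, hm'])⟩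
  have hord : orderOf u = q ^ n - 1 := by
    rw [orderOf_eq_card_of_forall_mem_zpowers hgen, Nat.card_units, Nat.card_eq_fintype_card, hF]
  have humod : a * q ≡ q ^ (n - 1) + (a * q ^ (n - 1) + p ^ k) [MOD q ^ n - 1] := by
    rw [← hord]
    exact pow_eq_pow_iff_modEq.mp (Units.ext (by rw [huval, huval]; exact hfield))
  have hdvdqn : (q - 1) ∣ (q ^ n - 1) := by
    simpa using Nat.sub_dvd_pow_sub_pow q 1 n
  have hmod2 : a * q ≡ q ^ (n - 1) + (a * q ^ (n - 1) + p ^ k) [MOD q - 1] :=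
    humod.of_dvd hdvdqn
  -- work in ZMod (q - 1)
  have hzmod : ((a * q : ℕ) : ZMod (q - 1)) =
      ((q ^ (n - 1) + (a * q ^ (n - 1) + p ^ k) : ℕ) : ZMod (q - 1)) :=
    (ZMod.natCast_eq_natCast_iff _ _ _).mpr hmod2
  have hqcast : ((q : ℕ) : ZMod (q - 1)) = 1 := by
    have hq' : q = (q - 1) + 1 := by omega
    rw [hq']
    push_cast [ZMod.natCast_self]
    ring
  have hpe : ((p : ℕ) : ZMod (q - 1)) ^ e = 1 := by
    rw [← Nat.cast_pow, ← hq, hqcast]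
  have hpk' : ((p : ℕ) : ZMod (q - 1)) ^ k = ((p : ℕ) : ZMod (q - 1)) ^ (k % e) := by
    conv_lhs => rw [← Nat.div_add_mod k e, pow_add, pow_mul, hpe, one_pow, one_mul]
  have hzero : ((1 + p ^ (k % e) : ℕ) : ZMod (q - 1)) = 0 := by
    push_cast at hzmod ⊢
    rw [hqcast, hpk'] at hzmod
    linear_combination -hzmod
  have hdvdfin : (q - 1) ∣ 1 + p ^ (k % e) :=
    (ZMod.natCast_eq_zero_iff _ _).mp hzero
  -- the final size contradiction
  have hmodlt : k % e < e := Nat.mod_lt k he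
  have hple : p ^ (k % e + 1) ≤ q := by
    rw [hq]
    exact Nat.pow_le_pow_right (by omega) (by omega)
  have h2le : 2 * p ^ (k % e) ≤ q := by
    calc 2 * p ^ (k % e) ≤ p * p ^ (k % e) := Nat.mul_le_mul_right _ hp2
      _ = p ^ (k % e + 1) := by ring
      _ ≤ q := hple
  have hpos : 0 < 1 + p ^ (k % e) := by positivity
  have hle := Nat.le_of_dvd hpos hdvdfin
  omega
end

section
/- Let p be a prime and q = p^e a prime power with q > 4. Then for every integer k ≥ 0, q − 1 does not divide p^k · q + 1. -/
/-- if `q = p^e > 4` is a prime power, then `q - 1` never divides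
`p^k · q + 1`. -/
theorem stmt_6 (p e q : ℕ) (hp : p.Prime) (he : 0 < e) (hq : q = p ^ e) (hq4 : 4 < q)
    (k : ℕ) : ¬ (q - 1 ∣ p ^ k * q + 1) := by
  intro h
  have hp2 : 2 ≤ p := hp.two_le
  set r := k % e with hr
  -- q ≡ 1 mod q-1
  have hq1 : q - 1 ∣ q - 1 := dvd_rfl
  have hqmod : (q : ℕ) ≡ 1 [MOD q - 1] := by
    have : 1 ≤ q := by omega
    exact ((Nat.modEq_iff_dvd' this).2 dvd_rfl).symm
  have hpe : (p ^ e : ℕ) ≡ 1 [MOD q - 1] := hq ▸ hqmod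
  -- p^k ≡ p^r
  have hk : p ^ k = (p ^ e) ^ (k / e) * p ^ r := by
    rw [← pow_mul, ← pow_add, Nat.div_add_mod]
  have hpk : (p ^ k : ℕ) ≡ p ^ r [MOD q - 1] := by
    calc p ^ k = (p ^ e) ^ (k / e) * p ^ r := hk
    _ ≡ 1 ^ (k / e) * p ^ r [MOD q - 1] := (hpe.pow _).mul_right _
    _ = p ^ r := by ring
  have hfull : (p ^ k * q + 1 : ℕ) ≡ p ^ r + 1 [MOD q - 1] := by
    calc p ^ k * q + 1 ≡ p ^ r * 1 + 1 [MOD q - 1] := (hpk.mul hqmod).add_right 1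
    _ = p ^ r + 1 := by ring
  have hdvd : q - 1 ∣ p ^ r + 1 := by
    have := (Nat.modEq_zero_iff_dvd).2 h
    exact (Nat.modEq_zero_iff_dvd).1 (hfull.symm.trans this)
  have hle : q - 1 ≤ p ^ r + 1 := Nat.le_of_dvd (by positivity) hdvd
  -- bound: p ^ r ≤ p ^ (e-1) and p^(e-1) + 3 ≤ p^e
  have hrlt : r < e := Nat.mod_lt _ he
  have hple : p ^ r ≤ p ^ (e - 1) := Nat.pow_le_pow_right (by omega) (by omega)
  have hsplit : p ^ e = p ^ (e - 1) * p := by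
    rw [← pow_succ]; congr 1; omega
  have hbig : p ^ (e - 1) + 3 ≤ p ^ e := by
    rcases Nat.lt_or_ge (p ^ (e - 1)) 3 with h3 | h3
    · interval_cases h' : p ^ (e - 1) <;> omega
    · nlinarith [hsplit]
  omega
end

section
/- Let f(x) = Σ_{i=0}^{n-1} a_i x^{q^i} be a q-polynomial over F_{q^n} and let f̂ be its adjoint. Then the orthogonal complement of the F_q-subspace U_f = {(x,f(x)) : x ∈ F_{q^n}} of F_{q^n} × F_{q^n} with respect to the nondegenerate alternating F_q-bilinear form η'((x,y),(u,v)) = Tr_{q^n/q}(xv − yu) equals U_{f̂} = {(x, f̂(x)) : x ∈ F_{q^n}}. -/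
/-- the orthogonal complement of `U_f = {(x, f(x))}` in
`F_{q^n} × F_{q^n}` with respect to `η'((x,y),(u,v)) = Tr_{q^n/q}(xv - yu)` is
`U_{f̂} = {(x, f̂(x))}`, where `f̂` is the adjoint of `f`. -/
theorem stmt_11 (p e n q : ℕ) (hp : p.Prime) (he : 0 < e) (hn : 0 < n) (hq : q = p ^ e)
    (F : Type) [Field F] [Fintype F] (hF : Fintype.card F = q ^ n)
    (a : ℕ → F) (f fhat : F → F)
    (hf : ∀ x : F, f x = ∑ i ∈ Finset.range n, a i * x ^ q ^ i)
    (hfhat : ∀ x : F, fhat x = ∑ i ∈ Finset.range n, (a i) ^ q ^ (n - i) * x ^ q ^ (n - i)) :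
    {w : F × F | ∀ s : F × F, (∃ x : F, s = (x, f x)) →
        ∑ i ∈ Finset.range n, (w.1 * s.2 - w.2 * s.1) ^ q ^ i = 0}
      = {w : F × F | ∃ x : F, w = (x, fhat x)} := by
  classical
  have hq1 : 1 < q := by
    rw [hq]; exact Nat.one_lt_pow he.ne' hp.one_lt
  haveI : Fact p.Prime := ⟨hp⟩
  -- characteristic of F is p
  haveI hcharF : CharP F p := by
    obtain ⟨p', hp'⟩ := CharP.exists F
    haveI := hp'
    have hp'p : p'.Prime := CharP.char_is_prime F p'
    obtain ⟨m, -, hm⟩ := FiniteField.card F p'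
    have hdvd : p ∣ p' ^ (m : ℕ) := by
      rw [← hm, hF, hq, ← pow_mul]
      exact dvd_pow_self p (by positivity)
    have : p = p' := (Nat.prime_dvd_prime_iff_eq hp hp'p).mp (hp.dvd_of_dvd_pow hdvd)
    rwa [this]
  have hqpow : ∀ k : ℕ, q ^ k = p ^ (e * k) := fun k => by rw [hq, ← pow_mul]
  -- Frobenius-type identities
  have hsum : ∀ (k : ℕ) (s : Finset ℕ) (t : ℕ → F),
      (∑ j ∈ s, t j) ^ q ^ k = ∑ j ∈ s, t j ^ q ^ k := by
    intro k s t
    rw [hqpow]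
    exact sum_pow_char_pow (R := F) (p := p) (n := e * k) s t
  have hsub : ∀ (k : ℕ) (x y : F), (x - y) ^ q ^ k = x ^ q ^ k - y ^ q ^ k := by
    intro k x y
    rw [hqpow]
    exact sub_pow_char_pow x y (e * k)
  -- x ^ q ^ n = x
  have hxn : ∀ x : F, x ^ q ^ n = x := fun x => by rw [← hF]; exact FiniteField.pow_card x
  have hit : ∀ (m : ℕ) (x : F), x ^ (q ^ n) ^ m = x := by
    intro m
    induction m with
    | zero => intro x; simp
    | succ m ih => intro x; rw [pow_succ, pow_mul, ih x, hxn]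
  have hmod : ∀ (x : F) (k : ℕ), x ^ q ^ k = x ^ q ^ (k % n) := by
    intro x k
    conv_lhs => rw [← Nat.div_add_mod k n]
    rw [pow_add, pow_mul q n, pow_mul x, hit]
  have hmono : ∀ (y : F) (i j : ℕ), (y ^ q ^ j) ^ q ^ i = y ^ q ^ ((j + i) % n) := by
    intro y i j
    rw [← pow_mul, ← pow_add, hmod]
  -- nondegeneracy of the trace form
  have ndg : ∀ c : F, (∀ x : F, ∑ i ∈ Finset.range n, (c * x) ^ q ^ i = 0) → c = 0 := by
    intro c hc
    by_contra hc0
    set P : Polynomial F := ∑ i ∈ Finset.range n,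
      Polynomial.C (c ^ q ^ i) * Polynomial.X ^ (q ^ i) with hPdef
    have heval : ∀ x : F, P.eval x = 0 := by
      intro x
      rw [hPdef, Polynomial.eval_finset_sum]
      simp only [Polynomial.eval_mul, Polynomial.eval_C, Polynomial.eval_pow, Polynomial.eval_X]
      rw [← hc x]
      exact Finset.sum_congr rfl fun i _ => (mul_pow c x _).symm
    have hdeg : P.natDegree < Fintype.card F := by
      have h1 : P.natDegree ≤ q ^ (n - 1) := by
        refine Polynomial.natDegree_sum_le_of_forall_le _ _ fun i hi => ?_
        refine (Polynomial.natDegree_C_mul_X_pow_le _ _).trans ?_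
        exact Nat.pow_le_pow_right (le_of_lt hq1) (by
          have := Finset.mem_range.mp hi; omega)
      calc P.natDegree ≤ q ^ (n - 1) := h1
        _ < q ^ n := Nat.pow_lt_pow_right hq1 (by omega)
        _ = Fintype.card F := hF.symm
    have hP0 : P = 0 := by
      refine Polynomial.eq_zero_of_natDegree_lt_card_of_eval_eq_zero' P Finset.univ
        (fun i _ => heval i) ?_
      simpa [Finset.card_univ] using hdeg
    have hco := congrArg (fun Q : Polynomial F => Q.coeff 1) hP0
    simp only [hPdef, Polynomial.finset_sum_coeff, Polynomial.coeff_C_mul,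
      Polynomial.coeff_X_pow, Polynomial.coeff_zero] at hco
    rw [Finset.sum_eq_single 0 (fun b _ hb => by
        have hb1 : q ^ b ≠ 1 := by
          intro h
          exact hb (by
            by_contra hb0
            have : q ^ 1 ≤ q ^ b := Nat.pow_le_pow_right (le_of_lt hq1) (by omega)
            simp [h] at this; omega)
        simp [Ne.symm hb1])
      (fun h => absurd (Finset.mem_range.mpr hn) h)] at hco
    simp at hco
    exact hc0 hco
  -- the key adjoint identity: Tr(u f(x)) = Tr(fhat(u) x)
  have key : ∀ u x : F,
      (∑ i ∈ Finset.range n, (u * f x) ^ q ^ i)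
        = ∑ i ∈ Finset.range n, (fhat u * x) ^ q ^ i := by
    intro u x
    have L : ∀ i, (u * f x) ^ q ^ i
        = ∑ j ∈ Finset.range n,
            u ^ q ^ (i % n) * (a j ^ q ^ (i % n) * x ^ q ^ ((j + i) % n)) := by
      intro i
      rw [hf, mul_pow, hsum, Finset.mul_sum]
      refine Finset.sum_congr rfl fun j _ => ?_
      rw [mul_pow, hmono x i j, hmod u i, hmod (a j) i]
    have R : ∀ i, (fhat u * x) ^ q ^ i
        = ∑ j ∈ Finset.range n,
            u ^ q ^ ((n - j + i) % n) * (a j ^ q ^ ((n - j + i) % n) * x ^ q ^ (i % n)) := by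
      intro i
      rw [hfhat, mul_pow, hsum, Finset.sum_mul]
      refine Finset.sum_congr rfl fun j _ => ?_
      rw [mul_pow, hmono (a j) i (n - j), hmono u i (n - j), hmod x i]
      ring
    calc (∑ i ∈ Finset.range n, (u * f x) ^ q ^ i)
        = ∑ i ∈ Finset.range n, ∑ j ∈ Finset.range n,
            u ^ q ^ (i % n) * (a j ^ q ^ (i % n) * x ^ q ^ ((j + i) % n)) :=
          Finset.sum_congr rfl fun i _ => L i
      _ = ∑ j ∈ Finset.range n, ∑ i ∈ Finset.range n,
            u ^ q ^ (i % n) * (a j ^ q ^ (i % n) * x ^ q ^ ((j + i) % n)) := Finset.sum_comm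
      _ = ∑ j ∈ Finset.range n, ∑ i ∈ Finset.range n,
            u ^ q ^ ((n - j + i) % n) * (a j ^ q ^ ((n - j + i) % n) * x ^ q ^ (i % n)) := by
          refine Finset.sum_congr rfl fun j hj => ?_
          have hjn : j < n := Finset.mem_range.mp hj
          refine (Finset.sum_nbij' (fun i => (i + (n - j)) % n) (fun i => (i + j) % n)
            ?_ ?_ ?_ ?_ ?_).symm
          · intro i _; exact Finset.mem_range.mpr (Nat.mod_lt _ hn)
          · intro i _; exact Finset.mem_range.mpr (Nat.mod_lt _ hn)
          · intro i hi
            have hin : i < n := Finset.mem_range.mp hi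
            show ((i + (n - j)) % n + j) % n = i
            rw [Nat.mod_add_mod]
            have : i + (n - j) + j = i + n := by omega
            rw [this, Nat.add_mod_right, Nat.mod_eq_of_lt hin]
          · intro i hi
            have hin : i < n := Finset.mem_range.mp hi
            show ((i + j) % n + (n - j)) % n = i
            rw [Nat.mod_add_mod]
            have : i + j + (n - j) = i + n := by omega
            rw [this, Nat.add_mod_right, Nat.mod_eq_of_lt hin]
          · intro i _
            have e1 : (i + (n - j)) % n % n = (n - j + i) % n := by
              rw [Nat.mod_mod_of_dvd _ dvd_rfl, Nat.add_comm]
            have e2 : (j + (i + (n - j)) % n) % n = i % n := by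
              rw [Nat.add_mod_mod]
              have : j + (i + (n - j)) = i + n := by omega
              rw [this, Nat.add_mod_right]
            rw [e1, e2]
      _ = ∑ i ∈ Finset.range n, ∑ j ∈ Finset.range n,
            u ^ q ^ ((n - j + i) % n) * (a j ^ q ^ ((n - j + i) % n) * x ^ q ^ (i % n)) :=
          Finset.sum_comm
      _ = ∑ i ∈ Finset.range n, (fhat u * x) ^ q ^ i :=
          Finset.sum_congr rfl fun i _ => (R i).symm
  -- main argument
  ext w
  obtain ⟨u, v⟩ := w
  simp only [Set.mem_setOf_eq]
  constructor
  · intro h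
    have h2 : ∀ x : F, ∑ i ∈ Finset.range n, ((fhat u - v) * x) ^ q ^ i = 0 := by
      intro x
      have h1 := h (x, f x) ⟨x, rfl⟩
      calc ∑ i ∈ Finset.range n, ((fhat u - v) * x) ^ q ^ i
          = ∑ i ∈ Finset.range n, ((fhat u * x) ^ q ^ i - (v * x) ^ q ^ i) := by
            refine Finset.sum_congr rfl fun i _ => ?_
            rw [sub_mul, hsub]
        _ = (∑ i ∈ Finset.range n, (fhat u * x) ^ q ^ i)
            - ∑ i ∈ Finset.range n, (v * x) ^ q ^ i := Finset.sum_sub_distrib _ _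
        _ = (∑ i ∈ Finset.range n, (u * f x) ^ q ^ i)
            - ∑ i ∈ Finset.range n, (v * x) ^ q ^ i := by rw [key]
        _ = ∑ i ∈ Finset.range n, ((u * f x) ^ q ^ i - (v * x) ^ q ^ i) :=
            (Finset.sum_sub_distrib _ _).symm
        _ = ∑ i ∈ Finset.range n, (u * f x - v * x) ^ q ^ i := by
            refine Finset.sum_congr rfl fun i _ => ?_
            rw [hsub]
        _ = 0 := h1
    have h3 := ndg _ h2
    rw [sub_eq_zero] at h3
    exact ⟨u, by rw [← h3]⟩
  · rintro ⟨x, hx⟩ s ⟨y, rfl⟩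
    rw [Prod.mk.injEq] at hx
    obtain ⟨rfl, rfl⟩ := hx
    show ∑ i ∈ Finset.range n, (u * f y - fhat u * y) ^ q ^ i = 0
    calc ∑ i ∈ Finset.range n, (u * f y - fhat u * y) ^ q ^ i
        = ∑ i ∈ Finset.range n, ((u * f y) ^ q ^ i - (fhat u * y) ^ q ^ i) := by
          refine Finset.sum_congr rfl fun i _ => ?_
          rw [hsub]
      _ = (∑ i ∈ Finset.range n, (u * f y) ^ q ^ i)
          - ∑ i ∈ Finset.range n, (fhat u * y) ^ q ^ i := Finset.sum_sub_distrib _ _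
      _ = 0 := by rw [key u y, sub_self]
end

section
/- Let a_1, a_3 ∈ F_{q^4} with N(a_1) ≠ N(a_3), where N(x) = x^{1+q+q^2+q^3}. Then the F_q-linear map w : F_{q^4} → F_{q^4}, w(A) = −a_1·A − a_3^q·A^q, is bijective, and its inverse is given by w^{-1}(x) = (−x·a_1^{q+q^2+q^3} + x^q·a_1^{q^2+q^3}·a_3^{q} − x^{q^2}·a_1^{q^3}·a_3^{q+q^2} + x^{q^3}·a_3^{q+q^2+q^3}) / (N(a_1) − N(a_3)). -/
/-- if `N(a_1) ≠ N(a_3)` in `F_{q^4}`, then the `F_q`-linear map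
`w(A) = -a_1 A - a_3^q A^q` is bijective, with the explicitly given inverse. -/
theorem stmt_16 (p e q : ℕ) (hp : p.Prime) (he : 0 < e) (hq : q = p ^ e)
    (F : Type) [Field F] [Fintype F] (hF : Fintype.card F = q ^ 4)
    (a1 a3 : F) (hN : a1 ^ (1 + q + q ^ 2 + q ^ 3) ≠ a3 ^ (1 + q + q ^ 2 + q ^ 3))
    (w winv : F → F)
    (hw : ∀ A : F, w A = -(a1 * A) - a3 ^ q * A ^ q)
    (hwinv : ∀ x : F, winv x =
      (-(x * a1 ^ (q + q ^ 2 + q ^ 3)) + x ^ q * a1 ^ (q ^ 2 + q ^ 3) * a3 ^ q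
          - x ^ q ^ 2 * a1 ^ q ^ 3 * a3 ^ (q + q ^ 2)
          + x ^ q ^ 3 * a3 ^ (q + q ^ 2 + q ^ 3))
        / (a1 ^ (1 + q + q ^ 2 + q ^ 3) - a3 ^ (1 + q + q ^ 2 + q ^ 3))) :
    Function.Bijective w ∧ (∀ x : F, w (winv x) = x) ∧ (∀ x : F, winv (w x) = x) := by
  -- characteristic
  haveI := ringChar.charP F
  obtain ⟨n, hrp, hcard⟩ := FiniteField.card F (ringChar F)
  have hrq : ringChar F = p := by
    have hd : ringChar F ∣ p ^ (4 * e) := by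
      have : (ringChar F) ∣ (ringChar F) ^ (n : ℕ) :=
        dvd_pow_self _ n.2.ne'
      rw [← hcard, hF, hq, ← pow_mul] at this
      simpa [mul_comm] using this
    exact (Nat.prime_dvd_prime_iff_eq hrp hp).mp (hrp.dvd_of_dvd_pow hd)
  haveI hchar : CharP F p := by rw [← hrq]; exact ringChar.charP F
  have hadd : ∀ x y : F, (x + y) ^ q = x ^ q + y ^ q := by
    intro x y; haveI : Fact p.Prime := ⟨hp⟩; rw [hq]; exact add_pow_char_pow (x:=x) (y:=y) p e
  have hq0 : 0 < q := by rw [hq]; exact pow_pos hp.pos e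
  have hneg : ∀ x : F, (-x) ^ q = -(x ^ q) := by
    intro x
    have h := hadd (-x) x
    simp [zero_pow hq0.ne'] at h
    exact eq_neg_of_add_eq_zero_left h.symm
  have hsub : ∀ x y : F, (x - y) ^ q = x ^ q - y ^ q := by
    intro x y
    rw [sub_eq_add_neg, hadd, hneg, sub_eq_add_neg]
  have hx4 : ∀ x : F, x ^ q ^ 4 = x := by
    intro x
    rw [← hF]; exact FiniteField.pow_card x
  have hD : a1 ^ (1 + q + q ^ 2 + q ^ 3) - a3 ^ (1 + q + q ^ 2 + q ^ 3) ≠ 0 :=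
    sub_ne_zero.mpr hN
  have key : ∀ A : F, winv (w A) = A := by
    intro A
    rw [hwinv, hw, div_eq_iff hD]
    have h1 : (-(a1 * A) - a3 ^ q * A ^ q) ^ q
        = -(a1 ^ q * A ^ q) - a3 ^ (q * q) * A ^ (q * q) := by
      rw [hsub, hneg, mul_pow, mul_pow, ← pow_mul, ← pow_mul]
    have h2 : (-(a1 * A) - a3 ^ q * A ^ q) ^ q ^ 2
        = -(a1 ^ q ^ 2 * A ^ q ^ 2) - a3 ^ (q * q ^ 2) * A ^ (q * q ^ 2) := by
      have : (q : ℕ) ^ 2 = q * q := sq q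
      rw [this, pow_mul, h1]
      rw [hsub, hneg, mul_pow, mul_pow, ← pow_mul, ← pow_mul, ← pow_mul, ← pow_mul]
      ring
    have h3 : (-(a1 * A) - a3 ^ q * A ^ q) ^ q ^ 3
        = -(a1 ^ q ^ 3 * A ^ q ^ 3) - a3 * A := by
      have e3 : (q : ℕ) ^ 3 = q ^ 2 * q := by ring
      rw [e3, pow_mul, h2]
      rw [hsub, hneg, mul_pow, mul_pow, ← pow_mul, ← pow_mul, ← pow_mul, ← pow_mul]
      have e4a : a3 ^ (q * q ^ 2 * q) = a3 := by
        have : q * q ^ 2 * q = q ^ 4 := by ring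
        rw [this, hx4]
      have e4A : A ^ (q * q ^ 2 * q) = A := by
        have : q * q ^ 2 * q = q ^ 4 := by ring
        rw [this, hx4]
      rw [e4a, e4A]
    rw [h1, h2, h3]
    ring
  have hinj : Function.Injective w := by
    intro a b hab
    have ha := key a
    rw [hab, key b] at ha
    exact ha.symm
  have hbij : Function.Bijective w := Finite.injective_iff_bijective.mp hinj
  refine ⟨hbij, ?_, key⟩
  intro x
  obtain ⟨A, hA⟩ := hbij.surjective x
  rw [← hA, key, hA]
end

section
/- Let q ≥ 2 be a prime power and n ≥ 2. For all integers i, j, k with 1 ≤ i ≤ n−1, 1 ≤ j ≤ n−1 and 1 ≤ k ≤ n−1, the congruence q^i + q^{j+k} ≡ q^k + 1 (mod q^n − 1) holds if and only if i = k and j + k = n. -/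
/-- for a prime power `q ≥ 2`, `n ≥ 2` and `1 ≤ i, j, k ≤ n-1`, one has
`q^i + q^{j+k} ≡ q^k + 1 (mod q^n - 1)` if and only if `i = k` and `j + k = n`. -/
theorem stmt_17 (q : ℕ) (hq2 : 2 ≤ q) (hqpp : ∃ p m : ℕ, p.Prime ∧ 0 < m ∧ q = p ^ m)
    (n : ℕ) (hn : 2 ≤ n) (i j k : ℕ)
    (hi1 : 1 ≤ i) (hi2 : i ≤ n - 1) (hj1 : 1 ≤ j) (hj2 : j ≤ n - 1)
    (hk1 : 1 ≤ k) (hk2 : k ≤ n - 1) :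
    q ^ i + q ^ (j + k) ≡ q ^ k + 1 [MOD q ^ n - 1] ↔ (i = k ∧ j + k = n) := by
  set Q : ℤ := (q : ℤ) with hQdef
  have hQ : (2 : ℤ) ≤ Q := by rw [hQdef]; exact_mod_cast hq2
  have h1n : (1 : ℕ) ≤ q ^ n := Nat.one_le_pow _ _ (by omega)
  have key : (q ^ i + q ^ (j + k) ≡ q ^ k + 1 [MOD q ^ n - 1]) ↔
      (Q ^ n - 1) ∣ (Q ^ k + 1 - (Q ^ i + Q ^ (j + k))) := by
    rw [Nat.modEq_iff_dvd]
    constructor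
    · intro h; convert h using 2 <;> push_cast [h1n] <;> ring
    · intro h; convert h using 2 <;> push_cast [h1n] <;> ring
  -- basic power facts
  have hQ1 : (1 : ℤ) < Q := by linarith
  have hMpos : (0 : ℤ) < Q ^ n - 1 := by
    have : (1 : ℤ) < Q ^ n := one_lt_pow₀ hQ1 (by omega)
    linarith
  have hpow_le : ∀ a : ℕ, a ≤ n - 1 → Q ^ a ≤ Q ^ (n - 1) :=
    fun a ha => pow_le_pow_right₀ (by linarith) ha
  have h2pow : 2 * Q ^ (n - 1) ≤ Q ^ n := by
    have hQn : Q ^ n = Q ^ (n - 1) * Q := by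
      rw [← pow_succ]; congr 1; omega
    have hp : (0 : ℤ) < Q ^ (n - 1) := pow_pos (by linarith) _
    nlinarith
  have hpow_lt : Q ^ (n - 1) < Q ^ n := pow_lt_pow_right₀ hQ1 (by omega)
  have hpos : ∀ a : ℕ, (0 : ℤ) < Q ^ a := fun a => pow_pos (by linarith) a
  -- the "mod q" argument: q^k + 1 = q^i + q^t with i,t,k ≥ 1 is impossible
  have modq : ∀ t : ℕ, 1 ≤ t → Q ^ k + 1 = Q ^ i + Q ^ t → False := by
    intro t ht heq
    have hi' : Q ^ i = Q * Q ^ (i - 1) := by rw [← pow_succ']; congr 1; omega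
    have ht' : Q ^ t = Q * Q ^ (t - 1) := by rw [← pow_succ']; congr 1; omega
    have hk' : Q ^ k = Q * Q ^ (k - 1) := by rw [← pow_succ']; congr 1; omega
    have hd : Q ∣ 1 := ⟨Q ^ (i - 1) + Q ^ (t - 1) - Q ^ (k - 1), by
      rw [hi', ht', hk'] at heq; linarith [heq]⟩
    have := Int.le_of_dvd one_pos hd
    linarith
  rw [key]
  constructor
  · intro h
    by_cases hjk : j + k ≤ n
    · -- |E| < 2M, so E = 0 or E = -(Q^n - 1)
      obtain ⟨c, hc⟩ := h
      have hek : Q ^ k ≤ Q ^ (n - 1) := hpow_le k hk2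
      have hei : Q ^ i ≤ Q ^ (n - 1) := hpow_le i hi2
      have hejk : Q ^ (j + k) ≤ Q ^ n := pow_le_pow_right₀ (by linarith) hjk
      have hub : Q ^ k + 1 - (Q ^ i + Q ^ (j + k)) < Q ^ n - 1 := by
        have := hpos i; have := hpos (j + k); linarith
      have hlb : -(2 * (Q ^ n - 1)) < Q ^ k + 1 - (Q ^ i + Q ^ (j + k)) := by
        have := hpos k; linarith
      have hc01 : c = 0 ∨ c = -1 := by
        rcases lt_trichotomy c 0 with h' | h' | h'
        · right
          by_contra hne
          have : c ≤ -2 := by omega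
          nlinarith
        · left; exact h'
        · exfalso
          have : 1 ≤ c := h'
          nlinarith
      rcases hc01 with rfl | rfl
      · exfalso
        simp at hc
        exact modq (j + k) (by omega) (by linarith)
      · -- Q^k + Q^n = Q^i + Q^(j+k)
        have heq : Q ^ k + Q ^ n = Q ^ i + Q ^ (j + k) := by linarith [hc]
        have hjkn : j + k = n := by
          by_contra hne
          have hlt : j + k ≤ n - 1 := by omega
          have := hpow_le (j + k) hlt
          have := hpos k
          linarith
        refine ⟨?_, hjkn⟩
        rw [hjkn] at heq
        have hik : Q ^ k = Q ^ i := by linarith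
        rcases Nat.lt_trichotomy i k with h' | h' | h'
        · have := pow_lt_pow_right₀ hQ1 h'; linarith
        · exact h'
        · have := pow_lt_pow_right₀ hQ1 h'; linarith
    · -- j + k > n: reduce exponent, get contradiction
      exfalso
      set t := j + k - n with htdef
      have ht1 : 1 ≤ t := by omega
      have ht2 : t ≤ n - 1 := by omega
      have hsplit : Q ^ (j + k) = Q ^ n * Q ^ t := by
        rw [← pow_add]; congr 1; omega
      have hdvd2 : (Q ^ n - 1) ∣ (Q ^ (j + k) - Q ^ t) := by
        exact ⟨Q ^ t, by rw [hsplit]; ring⟩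
      have h' : (Q ^ n - 1) ∣ (Q ^ k + 1 - (Q ^ i + Q ^ t)) := by
        have : (Q ^ n - 1) ∣ _ := dvd_add h hdvd2
        convert this using 1; ring
      have hE0 : Q ^ k + 1 - (Q ^ i + Q ^ t) = 0 := by
        apply Int.eq_zero_of_abs_lt_dvd h'
        rw [abs_lt]
        have hek := hpow_le k hk2
        have hei := hpow_le i hi2
        have het := hpow_le t ht2
        have := hpos i; have := hpos t; have := hpos k
        constructor <;> linarith
      exact modq t ht1 (by linarith)
  · rintro ⟨rfl, hjkn⟩
    rw [hjkn]
    refine ⟨-1, ?_⟩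
    ring
end
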